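/- In a braided multiplicity-free semi-simple tensor system over a commutative ring R, fix λ, ν ∈ I with ν acting one-dimensionally on λ, and the homogeneous tuple λ̃ = (λ,…,λ) of length L. Then for all admissible 1 ≤ i, i±1 ≤ L−1, as operators on H_{λ̃}: p_i^{(ν)} R_{i±1} p_i^{(ν)} = [Σ_{υ∈I} (F^{λλλ}_{φ_ν(λ)})^υ_ν R^{λλ}_υ (F̄^{λλλ}_{φ_ν(λ)})^ν_υ] p_i^{(ν)}, and p_i^{(ν)} R_{i±1}^{-1} p_i^{(ν)} = [Σ_{υ∈I} (F^{λλλ}_{φ_ν(λ)})^υ_ν R̄^{λλ}_υ (F̄^{λλλ}_{φ_ν(λ)})^ν_υ] p_i^{(ν)}, where R_j^{-1} denotes Σ_{μ∈I} R̄^{λλ}_μ p_j^{(μ)}. -/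

import Mathlib

open scoped Classical

noncomputable section

/-- A multiplicity-free semi-simple tensor system over a commutative ring `R`,
with index set `I`, fusion constants `N`, and F-moves `F`, `Fbar`.
`F a b c d e f` denotes `(F^{abc}_d)^e_f` and `Fbar a b c d f e` denotes `(F̄^{abc}_d)^f_e`. -/
structure TensorSystem (R : Type*) [CommRing R] (I : Type*) where
  N : I → I → I → ℕ
  F : I → I → I → I → I → I → R
  Fbar : I → I → I → I → I → I → R
  N_le_one : ∀ a b c, N a b c ≤ 1
  N_assoc : ∀ a b c d, (∑ᶠ e, N a b e * N e c d) = ∑ᶠ e, N a e d * N b c e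
  N_finite : ∀ a b, (Function.support fun c => N a b c).Finite
  F_vanish : ∀ a b c d e f, N a b e * N b c f * N a f d * N e c d = 0 → F a b c d e f = 0
  Fbar_vanish : ∀ a b c d e f, N a b e * N b c f * N a f d * N e c d = 0 → Fbar a b c d f e = 0
  pentagon : ∀ a b c d e f g k l,
      (∑ᶠ h, F a b c g f h * F a h d e g k * F b c d k h l) = F f c d e g l * F a b l e f k
  F_Fbar : ∀ a b c d e e',
      (∑ᶠ f, F a b c d e f * Fbar a b c d f e')
        = (if e = e' then (1 : R) else 0) * (N a b e : R) * (N e c d : R)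
  Fbar_F : ∀ a b c d f f',
      (∑ᶠ e, Fbar a b c d f' e * F a b c d e f)
        = (if f = f' then (1 : R) else 0) * (N b c f : R) * (N a f d : R)

namespace TensorSystem

variable {R : Type*} [CommRing R] {I : Type*}

open Fin.NatCast

/-- `μ = (μ₀, μ₁, …, μ_L)` is a fusion path for the tuple `λ̃ = (lam 1, …, lam L)`:
`μ₀ ∈ I0` and `N_{μ_{i-1} λ_i}^{μ_i} = 1` for `1 ≤ i ≤ L`. -/
def IsPath (TS : TensorSystem R I) (L : ℕ) (I0 : Set I) (lam : ℕ → I)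
    (μ : Fin (L + 1) → I) : Prop :=
  μ 0 ∈ I0 ∧ ∀ i : ℕ, 1 ≤ i → i ≤ L →
    TS.N (μ ((i - 1 : ℕ) : Fin (L + 1))) (lam i) (μ ((i : ℕ) : Fin (L + 1))) = 1

/-- Matrix element `⟨μ'| p_i^{(ν)} |μ⟩` of the two-site projection operator. -/
def pMat (TS : TensorSystem R I) (L : ℕ) (lam : ℕ → I) (i : ℕ) (ν : I)
    (μ' μ : Fin (L + 1) → I) : R :=
  (∏ j ∈ Finset.univ.erase ((i : ℕ) : Fin (L + 1)), if μ j = μ' j then (1 : R) else 0)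
    * TS.Fbar (μ ((i - 1 : ℕ) : Fin (L + 1))) (lam i) (lam (i + 1))
        (μ ((i + 1 : ℕ) : Fin (L + 1))) ν (μ' ((i : ℕ) : Fin (L + 1)))
    * TS.F (μ ((i - 1 : ℕ) : Fin (L + 1))) (lam i) (lam (i + 1))
        (μ ((i + 1 : ℕ) : Fin (L + 1))) (μ ((i : ℕ) : Fin (L + 1))) ν

/-- Matrix elements of the composition of two operators on `H_{λ̃}`,
summing over the fusion-path basis. -/
def mulMat (TS : TensorSystem R I) (L : ℕ) (I0 : Set I) (lam : ℕ → I)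
    (A B : (Fin (L + 1) → I) → (Fin (L + 1) → I) → R)
    (μ' μ : Fin (L + 1) → I) : R :=
  ∑ᶠ μ'' ∈ {x : Fin (L + 1) → I | TS.IsPath L I0 lam x}, A μ' μ'' * B μ'' μ

/-- Two operators on `H_{λ̃}` are equal iff all their matrix elements between
fusion-path basis vectors agree. -/
def MatEqOn (TS : TensorSystem R I) (L : ℕ) (I0 : Set I) (lam : ℕ → I)
    (A B : (Fin (L + 1) → I) → (Fin (L + 1) → I) → R) : Prop :=
  ∀ μ' μ : Fin (L + 1) → I, TS.IsPath L I0 lam μ' → TS.IsPath L I0 lam μ → A μ' μ = B μ' μ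

/-- Extended fusion numbers `N_{a a₁ ⋯ aₙ}^b` along a list `[a₁, …, aₙ]`. -/
def Nseq (TS : TensorSystem R I) : I → List I → I → ℕ
  | a, [], b => if a = b then 1 else 0
  | a, c :: rest, b => ∑ᶠ x, TS.N a c x * Nseq TS x rest b

/-- `ν` acts one-dimensionally on the left of `μ`. -/
def ActsOneDimLeft (TS : TensorSystem R I) (ν μ : I) : Prop :=
  (∑ᶠ μ' : I, TS.N ν μ μ') = 1

/-- `ν` acts one-dimensionally on the right of `μ`. -/
def ActsOneDimRight (TS : TensorSystem R I) (ν μ : I) : Prop :=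
  (∑ᶠ μ' : I, TS.N μ ν μ') = 1

end TensorSystem

/-- Matrix elements of the identity operator. -/
def deltaMat {R : Type*} [CommRing R] {I : Type*} (L : ℕ)
    (μ' μ : Fin (L + 1) → I) : R :=
  ∏ j : Fin (L + 1), if μ j = μ' j then (1 : R) else 0

/-- Scalar multiple of a matrix of operator matrix elements. -/
def smulMat {R : Type*} [CommRing R] {α : Sort*} (c : R) (A : α → α → R) : α → α → R :=
  fun x y => c * A x y

/-- A braided multiplicity-free semi-simple tensor system: additionally `N` is
symmetric and there are braiding constants `Rm a b c = R^{ab}_c`,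
`Rbarm a b c = R̄^{ab}_c` satisfying the hexagon relations. -/
structure BraidedTensorSystem (R : Type*) [CommRing R] (I : Type*) extends TensorSystem R I where
  N_symm : ∀ a b c, N a b c = N b a c
  Rm : I → I → I → R
  Rbarm : I → I → I → R
  Rm_vanish : ∀ a b c, N a b c = 0 → Rm a b c = 0
  Rbarm_vanish : ∀ a b c, N a b c = 0 → Rbarm a b c = 0
  hexagonR : ∀ a b c d e g,
      Rm a c e * F a c b d e g * Rm b c g
        = ∑ᶠ f, F c a b d e f * Rm f c d * F a b c d f g
  hexagonRbar : ∀ a b c d e g,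
      Rbarm a c e * F a c b d e g * Rbarm b c g
        = ∑ᶠ f, F c a b d e f * Rbarm f c d * F a b c d f g
  Rm_Rbarm : ∀ a b c, Rm a b c * Rbarm b a c = (N a b c : R)

namespace BraidedTensorSystem

variable {R : Type*} [CommRing R] {I : Type*}

/-- Matrix elements of the braiding operator `R_i = Σ_m R^{λλ}_m p_i^{(m)}`
on a homogeneous chain `λ̃ = (lam0, …, lam0)`. -/
def Rmat (BTS : BraidedTensorSystem R I) (L : ℕ) (lam0 : I) (i : ℕ)
    (μ' μ : Fin (L + 1) → I) : R :=
  ∑ᶠ m : I, BTS.Rm lam0 lam0 m * BTS.toTensorSystem.pMat L (fun _ => lam0) i m μ' μ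

/-- Matrix elements of the inverse braiding operator
`R_i⁻¹ = Σ_m R̄^{λλ}_m p_i^{(m)}`. -/
def RbarMat (BTS : BraidedTensorSystem R I) (L : ℕ) (lam0 : I) (i : ℕ)
    (μ' μ : Fin (L + 1) → I) : R :=
  ∑ᶠ m : I, BTS.Rbarm lam0 lam0 m * BTS.toTensorSystem.pMat L (fun _ => lam0) i m μ' μ

end BraidedTensorSystem
namespace TensorSystem

section Basic

variable {R : Type*} [CommRing R] {I : Type*} (TS : TensorSystem R I)

lemma N_zero_or_one (a b c : I) : TS.N a b c = 0 ∨ TS.N a b c = 1 := by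
  have := TS.N_le_one a b c; omega

/-- The finite support of `N a b ·` as a `Finset`. -/
def sN (a b : I) : Finset I := (TS.N_finite a b).toFinset

lemma mem_sN {a b : I} {x : I} : x ∈ TS.sN a b ↔ TS.N a b x ≠ 0 := by
  simp [sN]

lemma F_zero₁ {a b e : I} (c d f : I) (h : TS.N a b e = 0) : TS.F a b c d e f = 0 :=
  TS.F_vanish a b c d e f (by rw [h, zero_mul, zero_mul, zero_mul])
lemma F_zero₂ {b c f : I} (a d e : I) (h : TS.N b c f = 0) : TS.F a b c d e f = 0 :=
  TS.F_vanish a b c d e f (by rw [h, mul_zero, zero_mul, zero_mul])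
lemma F_zero₃ {a f d : I} (b c e : I) (h : TS.N a f d = 0) : TS.F a b c d e f = 0 :=
  TS.F_vanish a b c d e f (by rw [h, mul_zero, zero_mul])
lemma F_zero₄ {e c d : I} (a b f : I) (h : TS.N e c d = 0) : TS.F a b c d e f = 0 :=
  TS.F_vanish a b c d e f (by rw [h, mul_zero])

lemma Fbar_zero₁ {a b e : I} (c d f : I) (h : TS.N a b e = 0) : TS.Fbar a b c d f e = 0 :=
  TS.Fbar_vanish a b c d e f (by rw [h, zero_mul, zero_mul, zero_mul])
lemma Fbar_zero₂ {b c f : I} (a d e : I) (h : TS.N b c f = 0) : TS.Fbar a b c d f e = 0 :=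
  TS.Fbar_vanish a b c d e f (by rw [h, mul_zero, zero_mul, zero_mul])
lemma Fbar_zero₃ {a f d : I} (b c e : I) (h : TS.N a f d = 0) : TS.Fbar a b c d f e = 0 :=
  TS.Fbar_vanish a b c d e f (by rw [h, mul_zero, zero_mul])
lemma Fbar_zero₄ {e c d : I} (a b f : I) (h : TS.N e c d = 0) : TS.Fbar a b c d f e = 0 :=
  TS.Fbar_vanish a b c d e f (by rw [h, mul_zero])

private lemma absorb_aux {x : R} {n : ℕ} (hn : n ≤ 1) (h : n = 0 → x = 0) :
    x * (n : R) = x := by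
  interval_cases n
  · simp [h rfl]
  · simp

lemma F_mulN₁ (a b c d e f : I) : TS.F a b c d e f * (TS.N a b e : R) = TS.F a b c d e f :=
  absorb_aux (TS.N_le_one _ _ _) (TS.F_zero₁ c d f)
lemma F_mulN₂ (a b c d e f : I) : TS.F a b c d e f * (TS.N b c f : R) = TS.F a b c d e f :=
  absorb_aux (TS.N_le_one _ _ _) (TS.F_zero₂ a d e)
lemma F_mulN₃ (a b c d e f : I) : TS.F a b c d e f * (TS.N a f d : R) = TS.F a b c d e f :=
  absorb_aux (TS.N_le_one _ _ _) (TS.F_zero₃ b c e)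
lemma F_mulN₄ (a b c d e f : I) : TS.F a b c d e f * (TS.N e c d : R) = TS.F a b c d e f :=
  absorb_aux (TS.N_le_one _ _ _) (TS.F_zero₄ a b f)

lemma Fbar_mulN₁ (a b c d e f : I) : TS.Fbar a b c d f e * (TS.N a b e : R) = TS.Fbar a b c d f e :=
  absorb_aux (TS.N_le_one _ _ _) (TS.Fbar_zero₁ c d f)
lemma Fbar_mulN₂ (a b c d e f : I) : TS.Fbar a b c d f e * (TS.N b c f : R) = TS.Fbar a b c d f e :=
  absorb_aux (TS.N_le_one _ _ _) (TS.Fbar_zero₂ a d e)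
lemma Fbar_mulN₃ (a b c d e f : I) : TS.Fbar a b c d f e * (TS.N a f d : R) = TS.Fbar a b c d f e :=
  absorb_aux (TS.N_le_one _ _ _) (TS.Fbar_zero₃ b c e)
lemma Fbar_mulN₄ (a b c d e f : I) : TS.Fbar a b c d f e * (TS.N e c d : R) = TS.Fbar a b c d f e :=
  absorb_aux (TS.N_le_one _ _ _) (TS.Fbar_zero₄ a b f)

/-- `F.3` as a `Finset` sum. -/
lemma sum_F_Fbar {b c : I} {s : Finset I} (hs : ∀ x, TS.N b c x ≠ 0 → x ∈ s)
    (a d e e' : I) :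
    ∑ x ∈ s, TS.F a b c d e x * TS.Fbar a b c d x e'
      = (if e = e' then (1 : R) else 0) * (TS.N a b e : R) * (TS.N e c d : R) := by
  rw [← finsum_eq_sum_of_support_subset _ (fun x hx => by
    simp only [Finset.coe_sort_coe, Finset.mem_coe]
    refine hs x fun hN => hx ?_
    simp [Function.mem_support, TS.F_zero₂ a d e hN] at hx ⊢)]
  exact TS.F_Fbar a b c d e e'

/-- `F.4` as a `Finset` sum. -/
lemma sum_Fbar_F {a b : I} {s : Finset I} (hs : ∀ x, TS.N a b x ≠ 0 → x ∈ s)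
    (c d f f' : I) :
    ∑ x ∈ s, TS.Fbar a b c d f' x * TS.F a b c d x f
      = (if f = f' then (1 : R) else 0) * (TS.N b c f : R) * (TS.N a f d : R) := by
  rw [← finsum_eq_sum_of_support_subset _ (fun x hx => by
    simp only [Finset.coe_sort_coe, Finset.mem_coe]
    refine hs x fun hN => hx ?_
    simp [Function.mem_support, TS.Fbar_zero₁ c d f' hN] at hx ⊢)]
  exact TS.Fbar_F a b c d f f'

/-- The pentagon as a `Finset` sum. -/
lemma sum_pentagon {b c : I} {s : Finset I} (hs : ∀ x, TS.N b c x ≠ 0 → x ∈ s)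
    (a d e f g k l : I) :
    ∑ x ∈ s, TS.F a b c g f x * TS.F a x d e g k * TS.F b c d k x l
      = TS.F f c d e g l * TS.F a b l e f k := by
  rw [← finsum_eq_sum_of_support_subset _ (fun x hx => by
    simp only [Finset.coe_sort_coe, Finset.mem_coe]
    refine hs x fun hN => hx ?_
    simp [Function.mem_support, TS.F_zero₂ a g f hN] at hx ⊢)]
  exact TS.pentagon a b c d e f g k l

end Basic

end TensorSystem
namespace TensorSystem

section PentagonBar

variable {R : Type*} [CommRing R] {I : Type*} (TS : TensorSystem R I)

private lemma sum_delta {s : Finset I} {x₀ : I} (hx : x₀ ∈ s) (G : I → R) :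
    ∑ x ∈ s, (if x = x₀ then (1 : R) else 0) * G x = G x₀ := by
  rw [Finset.sum_eq_single_of_mem x₀ hx (fun y _ hy => by simp [hy])]
  simp

private lemma sum_sum_delta {s : Finset I} {t : I → Finset I} {x₀ y₀ : I}
    (hx : x₀ ∈ s) (hy : y₀ ∈ t x₀) (c : R) (G : I → I → R) :
    ∑ x ∈ s, ∑ y ∈ t x, G x y * (if x = x₀ ∧ y = y₀ then c else 0) = G x₀ y₀ * c := by
  rw [Finset.sum_eq_single_of_mem x₀ hx
    (fun x _ hxne => Finset.sum_eq_zero fun y _ => by simp [hxne])]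
  rw [Finset.sum_eq_single_of_mem y₀ hy (fun y _ hyne => by simp [hyne])]
  simp

/-- The pentagon identity for the inverse F-moves. -/
lemma pentagon_bar (a b c d e f g k l : I) :
    ∑ h ∈ TS.sN b c, TS.Fbar b c d k l h * TS.Fbar a h d e k g * TS.Fbar a b c g h f
      = TS.Fbar a b l e k f * TS.Fbar f c d e l g := by
  classical
  by_cases hl : TS.N c d l = 0
  · rw [TS.Fbar_zero₂ f e g hl, mul_zero]
    exact Finset.sum_eq_zero fun h _ => by rw [TS.Fbar_zero₂ b k h hl, zero_mul, zero_mul]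
  by_cases hk : TS.N b l k = 0
  · rw [TS.Fbar_zero₂ a e f hk, zero_mul]
    exact Finset.sum_eq_zero fun h _ => by rw [TS.Fbar_zero₃ c d h hk, zero_mul, zero_mul]
  by_cases hf : TS.N a b f = 0
  · rw [TS.Fbar_zero₁ l e k hf, zero_mul]
    exact Finset.sum_eq_zero fun h _ => by rw [TS.Fbar_zero₁ c g h hf, mul_zero]
  by_cases hg : TS.N f c g = 0
  · rw [TS.Fbar_zero₁ d e l hg, mul_zero]
    exact Finset.sum_eq_zero fun h _ => by rw [TS.Fbar_zero₄ a b h hg, mul_zero]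
  set K : Finset I :=
    ((TS.sN c d).biUnion fun l' => TS.sN b l') ∪ ((TS.sN b c).biUnion fun h' => TS.sN h' d)
    with hKdef
  have hkK : k ∈ K :=
    Finset.mem_union_left _ (Finset.mem_biUnion.2 ⟨l, TS.mem_sN.2 hl, TS.mem_sN.2 hk⟩)
  have hlcd : l ∈ TS.sN c d := TS.mem_sN.2 hl
  have hfab : f ∈ TS.sN a b := TS.mem_sN.2 hf
  have hgfc : g ∈ TS.sN f c := TS.mem_sN.2 hg
  have hKd : ∀ h' : I, TS.N b c h' ≠ 0 → ∀ x : I, TS.N h' d x ≠ 0 → x ∈ K := fun h' hh x hx =>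
    Finset.mem_union_right _ (Finset.mem_biUnion.2 ⟨h', TS.mem_sN.2 hh, TS.mem_sN.2 hx⟩)
  -- the pivot double-sum expression
  set Lb : I → I → R := fun l' k' =>
    ∑ h' ∈ TS.sN b c, TS.Fbar b c d k' l' h' * TS.Fbar a h' d e k' g * TS.Fbar a b c g h' f
    with hLb
  have wayA : ∀ l' k' : I,
      (∑ f₀ ∈ TS.sN a b, ∑ g₀ ∈ TS.sN f₀ c,
        (TS.F f₀ c d e g₀ l' * TS.F a b l' e f₀ k')
          * (TS.Fbar a b l e k f₀ * TS.Fbar f₀ c d e l g₀))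
      = if l' = l ∧ k' = k then (TS.N c d l : R) * (TS.N b l k : R) * (TS.N a k e : R)
        else 0 := by
    intro l' k'
    have inner : ∀ f₀ : I,
        (∑ g₀ ∈ TS.sN f₀ c,
          (TS.F f₀ c d e g₀ l' * TS.F a b l' e f₀ k')
            * (TS.Fbar a b l e k f₀ * TS.Fbar f₀ c d e l g₀))
        = (TS.F a b l' e f₀ k' * TS.Fbar a b l e k f₀)
            * ((if l' = l then (1 : R) else 0) * (TS.N c d l' : R) * (TS.N f₀ l' e : R)) := by
      intro f₀
      rw [← TS.sum_Fbar_F (fun x hx => TS.mem_sN.2 hx) d e l' l, Finset.mul_sum]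
      exact Finset.sum_congr rfl fun g₀ _ => by ring
    rw [Finset.sum_congr rfl fun f₀ _ => inner f₀]
    by_cases hll : l' = l
    · subst hll
      simp only [eq_self_iff_true, if_true, true_and, one_mul]
      have step : ∀ f₀ : I,
          (TS.F a b l' e f₀ k' * TS.Fbar a b l' e k f₀)
            * ((TS.N c d l' : R) * (TS.N f₀ l' e : R))
          = (TS.N c d l' : R) * (TS.Fbar a b l' e k f₀ * TS.F a b l' e f₀ k') := by
        intro f₀
        have habs := TS.Fbar_mulN₄ a b l' e f₀ k
        linear_combination (TS.N c d l' : R) * TS.F a b l' e f₀ k' * habs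
      rw [Finset.sum_congr rfl fun f₀ _ => step f₀, ← Finset.mul_sum,
        TS.sum_Fbar_F (fun x hx => TS.mem_sN.2 hx) l' e k' k]
      by_cases hkk : k' = k
      · subst hkk; simp only [eq_self_iff_true, if_true, true_and, one_mul]; ring
      · simp [hkk]
    · simp [hll]
  have wayB : ∀ f₀ g₀ : I,
      (∑ l' ∈ TS.sN c d, ∑ k' ∈ K, Lb l' k'
        * (∑ h₀ ∈ TS.sN b c, TS.F a b c g₀ f₀ h₀ * TS.F a h₀ d e g₀ k' * TS.F b c d k' h₀ l'))
      = if f₀ = f ∧ g₀ = g then (TS.N g d e : R) * (TS.N a b f : R) * (TS.N f c g : R)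
        else 0 := by
    intro f₀ g₀
    -- expand Lb and push the l'-sum inside
    have expand : ∀ l' k' : I, Lb l' k'
        * (∑ h₀ ∈ TS.sN b c, TS.F a b c g₀ f₀ h₀ * TS.F a h₀ d e g₀ k' * TS.F b c d k' h₀ l')
        = ∑ h' ∈ TS.sN b c, ∑ h₀ ∈ TS.sN b c,
            (TS.Fbar b c d k' l' h' * TS.Fbar a h' d e k' g * TS.Fbar a b c g h' f)
            * (TS.F a b c g₀ f₀ h₀ * TS.F a h₀ d e g₀ k' * TS.F b c d k' h₀ l') := by
      intro l' k'
      rw [hLb, Finset.sum_mul]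
      exact Finset.sum_congr rfl fun h' _ => by rw [Finset.mul_sum]
    rw [Finset.sum_congr rfl fun l' _ => Finset.sum_congr rfl fun k' _ => expand l' k']
    -- move the l'-sum innermost
    have swap1 :
        (∑ l' ∈ TS.sN c d, ∑ k' ∈ K, ∑ h' ∈ TS.sN b c, ∑ h₀ ∈ TS.sN b c,
            (TS.Fbar b c d k' l' h' * TS.Fbar a h' d e k' g * TS.Fbar a b c g h' f)
            * (TS.F a b c g₀ f₀ h₀ * TS.F a h₀ d e g₀ k' * TS.F b c d k' h₀ l'))
        = ∑ k' ∈ K, ∑ h' ∈ TS.sN b c, ∑ h₀ ∈ TS.sN b c, ∑ l' ∈ TS.sN c d,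
            (TS.Fbar b c d k' l' h' * TS.Fbar a h' d e k' g * TS.Fbar a b c g h' f)
            * (TS.F a b c g₀ f₀ h₀ * TS.F a h₀ d e g₀ k' * TS.F b c d k' h₀ l') := by
      rw [Finset.sum_comm]
      exact Finset.sum_congr rfl fun k' _ => by
        rw [Finset.sum_comm]
        exact Finset.sum_congr rfl fun h' _ => by rw [Finset.sum_comm]
    rw [swap1]
    -- contract l'
    have contr_l : ∀ k' h' h₀ : I,
        (∑ l' ∈ TS.sN c d,
            (TS.Fbar b c d k' l' h' * TS.Fbar a h' d e k' g * TS.Fbar a b c g h' f)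
            * (TS.F a b c g₀ f₀ h₀ * TS.F a h₀ d e g₀ k' * TS.F b c d k' h₀ l'))
        = (TS.Fbar a h' d e k' g * TS.Fbar a b c g h' f
            * (TS.F a b c g₀ f₀ h₀ * TS.F a h₀ d e g₀ k'))
          * ((if h₀ = h' then (1 : R) else 0) * (TS.N b c h₀ : R) * (TS.N h₀ d k' : R)) := by
      intro k' h' h₀
      rw [← TS.sum_F_Fbar (fun x hx => TS.mem_sN.2 hx) b k' h₀ h', Finset.mul_sum]
      exact Finset.sum_congr rfl fun l' _ => by ring
    rw [Finset.sum_congr rfl fun k' _ => Finset.sum_congr rfl fun h' hh' =>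
      Finset.sum_congr rfl fun h₀ _ => contr_l k' h' h₀]
    -- collapse h₀ = h'
    have coll_h : ∀ k' : I, ∀ h' ∈ TS.sN b c,
        (∑ h₀ ∈ TS.sN b c,
          (TS.Fbar a h' d e k' g * TS.Fbar a b c g h' f
            * (TS.F a b c g₀ f₀ h₀ * TS.F a h₀ d e g₀ k'))
          * ((if h₀ = h' then (1 : R) else 0) * (TS.N b c h₀ : R) * (TS.N h₀ d k' : R)))
        = (TS.F a h' d e g₀ k' * TS.Fbar a h' d e k' g)
            * (TS.Fbar a b c g h' f * TS.F a b c g₀ f₀ h' * (TS.N b c h' : R)) := by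
      intro k' h' hh'
      have : ∀ h₀ : I,
          (TS.Fbar a h' d e k' g * TS.Fbar a b c g h' f
            * (TS.F a b c g₀ f₀ h₀ * TS.F a h₀ d e g₀ k'))
          * ((if h₀ = h' then (1 : R) else 0) * (TS.N b c h₀ : R) * (TS.N h₀ d k' : R))
          = (if h₀ = h' then (1 : R) else 0)
            * ((TS.Fbar a h' d e k' g * TS.Fbar a b c g h' f
              * (TS.F a b c g₀ f₀ h₀ * TS.F a h₀ d e g₀ k'))
              * ((TS.N b c h₀ : R) * (TS.N h₀ d k' : R))) := by
        intro h₀; ring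
      rw [Finset.sum_congr rfl fun h₀ _ => this h₀, sum_delta hh']
      -- absorb the two N's
      have habs1 := TS.Fbar_mulN₂ a h' d e g k'
      linear_combination (TS.Fbar a b c g h' f * TS.F a b c g₀ f₀ h' * TS.F a h' d e g₀ k'
          * (TS.N b c h' : R)) * habs1
    rw [Finset.sum_congr rfl fun k' _ => Finset.sum_congr rfl fun h' hh' => coll_h k' h' hh']
    -- swap k' and h', contract k'
    rw [Finset.sum_comm]
    have contr_k : ∀ h' ∈ TS.sN b c,
        (∑ k' ∈ K, (TS.F a h' d e g₀ k' * TS.Fbar a h' d e k' g)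
          * (TS.Fbar a b c g h' f * TS.F a b c g₀ f₀ h' * (TS.N b c h' : R)))
        = ((if g₀ = g then (1 : R) else 0) * (TS.N a h' g₀ : R) * (TS.N g₀ d e : R))
            * (TS.Fbar a b c g h' f * TS.F a b c g₀ f₀ h' * (TS.N b c h' : R)) := by
      intro h' hh'
      rw [← Finset.sum_mul, TS.sum_F_Fbar (hKd h' (TS.mem_sN.1 hh')) a e g₀ g]
    rw [Finset.sum_congr rfl fun h' hh' => contr_k h' hh']
    by_cases hgg : g₀ = g
    · subst hgg
      simp only [eq_self_iff_true, if_true, true_and, and_true, one_mul]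
      have step : ∀ h' : I,
          ((TS.N a h' g₀ : R) * (TS.N g₀ d e : R))
            * (TS.Fbar a b c g₀ h' f * TS.F a b c g₀ f₀ h' * (TS.N b c h' : R))
          = (TS.N g₀ d e : R) * (TS.F a b c g₀ f₀ h' * TS.Fbar a b c g₀ h' f) := by
        intro h'
        have habs1 := TS.Fbar_mulN₃ a b c g₀ f h'
        have habs2 := TS.Fbar_mulN₂ a b c g₀ f h'
        linear_combination ((TS.N g₀ d e : R) * (TS.N b c h' : R) * TS.F a b c g₀ f₀ h') * habs1
          + ((TS.N g₀ d e : R) * TS.F a b c g₀ f₀ h') * habs2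
      rw [Finset.sum_congr rfl fun h' _ => step h', ← Finset.mul_sum,
        TS.sum_F_Fbar (fun x hx => TS.mem_sN.2 hx) a g₀ f₀ f]
      by_cases hff : f₀ = f
      · subst hff; simp only [eq_self_iff_true, if_true, true_and, and_true, one_mul]; ring
      · simp [hff]
    · simp [hgg]
  -- now assemble the two evaluations of the pivot sum
  have main :
      (∑ l' ∈ TS.sN c d, ∑ k' ∈ K, Lb l' k'
        * (∑ f₀ ∈ TS.sN a b, ∑ g₀ ∈ TS.sN f₀ c,
            (TS.F f₀ c d e g₀ l' * TS.F a b l' e f₀ k')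
              * (TS.Fbar a b l e k f₀ * TS.Fbar f₀ c d e l g₀)))
      = Lb l k * ((TS.N c d l : R) * (TS.N b l k : R) * (TS.N a k e : R)) := by
    rw [Finset.sum_congr rfl fun l' _ => Finset.sum_congr rfl fun k' _ => by
      rw [wayA l' k']]
    exact sum_sum_delta hlcd hkK _ _
  have main2 :
      (∑ l' ∈ TS.sN c d, ∑ k' ∈ K, Lb l' k'
        * (∑ f₀ ∈ TS.sN a b, ∑ g₀ ∈ TS.sN f₀ c,
            (TS.F f₀ c d e g₀ l' * TS.F a b l' e f₀ k')
              * (TS.Fbar a b l e k f₀ * TS.Fbar f₀ c d e l g₀)))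
      = TS.Fbar a b l e k f * TS.Fbar f c d e l g := by
    -- replace the F-product by the pentagon sum
    have pent : ∀ l' k' f₀ g₀ : I,
        TS.F f₀ c d e g₀ l' * TS.F a b l' e f₀ k'
        = ∑ h₀ ∈ TS.sN b c, TS.F a b c g₀ f₀ h₀ * TS.F a h₀ d e g₀ k' * TS.F b c d k' h₀ l' :=
      fun l' k' f₀ g₀ => (TS.sum_pentagon (fun x hx => TS.mem_sN.2 hx) a d e f₀ g₀ k' l').symm
    have rearr : ∀ l' k' : I, Lb l' k'
        * (∑ f₀ ∈ TS.sN a b, ∑ g₀ ∈ TS.sN f₀ c,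
            (TS.F f₀ c d e g₀ l' * TS.F a b l' e f₀ k')
              * (TS.Fbar a b l e k f₀ * TS.Fbar f₀ c d e l g₀))
        = ∑ f₀ ∈ TS.sN a b, ∑ g₀ ∈ TS.sN f₀ c,
            (Lb l' k'
              * (∑ h₀ ∈ TS.sN b c, TS.F a b c g₀ f₀ h₀ * TS.F a h₀ d e g₀ k' * TS.F b c d k' h₀ l'))
            * (TS.Fbar a b l e k f₀ * TS.Fbar f₀ c d e l g₀) := by
      intro l' k'
      rw [Finset.mul_sum]
      refine Finset.sum_congr rfl fun f₀ _ => ?_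
      rw [Finset.mul_sum]
      refine Finset.sum_congr rfl fun g₀ _ => ?_
      rw [pent l' k' f₀ g₀]; ring
    rw [Finset.sum_congr rfl fun l' _ => Finset.sum_congr rfl fun k' _ => rearr l' k']
    -- move the (f₀, g₀) sums outside
    have swap2 :
        (∑ l' ∈ TS.sN c d, ∑ k' ∈ K, ∑ f₀ ∈ TS.sN a b, ∑ g₀ ∈ TS.sN f₀ c,
            (Lb l' k'
              * (∑ h₀ ∈ TS.sN b c, TS.F a b c g₀ f₀ h₀ * TS.F a h₀ d e g₀ k' * TS.F b c d k' h₀ l'))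
            * (TS.Fbar a b l e k f₀ * TS.Fbar f₀ c d e l g₀))
        = ∑ f₀ ∈ TS.sN a b, ∑ g₀ ∈ TS.sN f₀ c, ∑ l' ∈ TS.sN c d, ∑ k' ∈ K,
            (Lb l' k'
              * (∑ h₀ ∈ TS.sN b c, TS.F a b c g₀ f₀ h₀ * TS.F a h₀ d e g₀ k' * TS.F b c d k' h₀ l'))
            * (TS.Fbar a b l e k f₀ * TS.Fbar f₀ c d e l g₀) := by
      rw [Finset.sum_congr rfl fun l' (_ : l' ∈ TS.sN c d) => Finset.sum_comm]
      rw [Finset.sum_congr rfl fun l' (_ : l' ∈ TS.sN c d) =>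
        Finset.sum_congr rfl fun f₀ (_ : f₀ ∈ TS.sN a b) => Finset.sum_comm]
      rw [Finset.sum_comm]
      exact Finset.sum_congr rfl fun f₀ _ => Finset.sum_comm
    rw [swap2]
    -- pull the (f₀,g₀)-factor out of the inner double sum and use wayB
    have inner2 : ∀ f₀ g₀ : I,
        (∑ l' ∈ TS.sN c d, ∑ k' ∈ K,
            (Lb l' k'
              * (∑ h₀ ∈ TS.sN b c, TS.F a b c g₀ f₀ h₀ * TS.F a h₀ d e g₀ k' * TS.F b c d k' h₀ l'))
            * (TS.Fbar a b l e k f₀ * TS.Fbar f₀ c d e l g₀))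
        = (TS.Fbar a b l e k f₀ * TS.Fbar f₀ c d e l g₀)
            * (if f₀ = f ∧ g₀ = g then (TS.N g d e : R) * (TS.N a b f : R) * (TS.N f c g : R)
              else 0) := by
      intro f₀ g₀
      rw [show (∑ l' ∈ TS.sN c d, ∑ k' ∈ K,
            (Lb l' k'
              * (∑ h₀ ∈ TS.sN b c, TS.F a b c g₀ f₀ h₀ * TS.F a h₀ d e g₀ k' * TS.F b c d k' h₀ l'))
            * (TS.Fbar a b l e k f₀ * TS.Fbar f₀ c d e l g₀))
          = (∑ l' ∈ TS.sN c d, ∑ k' ∈ K,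
            Lb l' k'
              * (∑ h₀ ∈ TS.sN b c, TS.F a b c g₀ f₀ h₀ * TS.F a h₀ d e g₀ k' * TS.F b c d k' h₀ l'))
            * (TS.Fbar a b l e k f₀ * TS.Fbar f₀ c d e l g₀) from by
        rw [Finset.sum_mul]
        exact Finset.sum_congr rfl fun l' _ => by rw [Finset.sum_mul]]
      rw [wayB f₀ g₀]; ring
    rw [Finset.sum_congr rfl fun f₀ _ => Finset.sum_congr rfl fun g₀ _ => inner2 f₀ g₀]
    rw [sum_sum_delta hfab hgfc]
    have habs1 := TS.Fbar_mulN₁ a b l e f k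
    have habs2 := TS.Fbar_mulN₁ f c d e g l
    have habs3 := TS.Fbar_mulN₄ f c d e g l
    linear_combination (TS.Fbar a b l e k f * (TS.N a b f : R) * (TS.N f c g : R)) * habs3
      + (TS.Fbar a b l e k f * (TS.N a b f : R)) * habs2
      + (TS.Fbar f c d e l g) * habs1
  -- conclude
  have habsL : Lb l k * ((TS.N c d l : R) * (TS.N b l k : R) * (TS.N a k e : R)) = Lb l k := by
    rw [hLb, Finset.sum_mul]
    refine Finset.sum_congr rfl fun h' _ => ?_
    have e1 := TS.Fbar_mulN₂ b c d k h' l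
    have e2 := TS.Fbar_mulN₃ b c d k h' l
    have e3 := TS.Fbar_mulN₃ a h' d e g k
    linear_combination (TS.Fbar a h' d e k g * TS.Fbar a b c g h' f * (TS.N b l k : R)
        * (TS.N a k e : R)) * e1
      + (TS.Fbar a h' d e k g * TS.Fbar a b c g h' f * (TS.N a k e : R)) * e2
      + (TS.Fbar b c d k l h' * TS.Fbar a b c g h' f) * e3
  calc Lb l k = Lb l k * ((TS.N c d l : R) * (TS.N b l k : R) * (TS.N a k e : R)) := habsL.symm
    _ = TS.Fbar a b l e k f * TS.Fbar f c d e l g := by rw [← main, main2]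

end PentagonBar

end TensorSystem
namespace TensorSystem

section Key

variable {R : Type*} [CommRing R] {I : Type*} (TS : TensorSystem R I) (lm ν φ : I)

/-- One-dimensionality: `φ` is the unique fusion channel of `ν ⊗ λ`. -/
lemma oneDim (hone : TS.ActsOneDimLeft ν lm) (hφ : TS.N ν lm φ = 1) :
    ∀ x : I, x ≠ φ → TS.N ν lm x = 0 := by
  intro x hx
  by_contra hNx
  have hsum : (∑ᶠ y : I, TS.N ν lm y) = ∑ y ∈ TS.sN ν lm, TS.N ν lm y :=
    finsum_eq_sum_of_support_subset _ (fun y hy => by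
      simpa [mem_sN] using (TS.mem_sN (a := ν) (b := lm)).2 hy)
  have hsub : ({x, φ} : Finset I) ⊆ TS.sN ν lm := by
    intro y hy
    rcases Finset.mem_insert.1 hy with rfl | hy
    · exact TS.mem_sN.2 hNx
    · rw [Finset.mem_singleton] at hy; subst hy
      exact TS.mem_sN.2 (by rw [hφ]; exact one_ne_zero)
  have hle : ∑ y ∈ ({x, φ} : Finset I), TS.N ν lm y ≤ ∑ y ∈ TS.sN ν lm, TS.N ν lm y :=
    Finset.sum_le_sum_of_subset hsub
  rw [Finset.sum_pair hx] at hle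
  have hone' : (∑ᶠ y : I, TS.N ν lm y) = 1 := hone
  rw [← hsum, hone'] at hle
  omega

/-- Collapse of `F.3` for `a ⊗ ν ⊗ λ` using one-dimensionality. -/
lemma Ffi (hone : TS.ActsOneDimLeft ν lm) (hφ : TS.N ν lm φ = 1) (a c c' d : I) :
    TS.F a ν lm d c φ * TS.Fbar a ν lm d φ c'
      = (if c = c' then (1 : R) else 0) * (TS.N a ν c : R) * (TS.N c lm d : R) := by
  rw [← TS.sum_F_Fbar (b := ν) (c := lm) (s := TS.sN ν lm) (fun x hx => TS.mem_sN.2 hx) a d c c']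
  rw [Finset.sum_eq_single_of_mem φ (TS.mem_sN.2 (by rw [hφ]; exact one_ne_zero))]
  intro k _ hk
  rw [TS.F_zero₂ a d c (TS.oneDim lm ν φ hone hφ k hk), zero_mul]

/-- Collapse of `F.3` for `a ⊗ λ ⊗ ν` using one-dimensionality and symmetry. -/
lemma Ffi' (hone : TS.ActsOneDimLeft ν lm) (hφ : TS.N ν lm φ = 1)
    (hsymm : ∀ x y z : I, TS.N x y z = TS.N y x z) (a b b' d : I) :
    TS.F a lm ν d b φ * TS.Fbar a lm ν d φ b'
      = (if b = b' then (1 : R) else 0) * (TS.N a lm b : R) * (TS.N b ν d : R) := by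
  rw [← TS.sum_F_Fbar (b := lm) (c := ν) (s := TS.sN lm ν) (fun x hx => TS.mem_sN.2 hx) a d b b']
  rw [Finset.sum_eq_single_of_mem φ
    (TS.mem_sN.2 (by rw [hsymm lm ν φ, hφ]; exact one_ne_zero))]
  intro k _ hk
  rw [TS.F_zero₂ a d b (by rw [hsymm lm ν k]; exact TS.oneDim lm ν φ hone hφ k hk), zero_mul]

/-- Contraction `(B)`: the `U`-side factor for the `i+1` case. -/
lemma Bfact (a c d m k : I) :
    ∑ x ∈ TS.sN a lm, TS.Fbar a lm lm c ν x * TS.F x lm lm d c m * TS.F a lm m d x k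
      = (TS.N lm lm ν : R) * (TS.N a ν c : R) * (TS.F a ν lm d c k * TS.F lm lm lm k ν m) := by
  have pent : ∀ x : I, TS.F x lm lm d c m * TS.F a lm m d x k
      = ∑ h ∈ TS.sN lm lm, TS.F a lm lm c x h * TS.F a h lm d c k * TS.F lm lm lm k h m :=
    fun x => (TS.sum_pentagon (b := lm) (c := lm) (fun y hy => TS.mem_sN.2 hy) a lm d x c k m).symm
  have step : ∀ x : I,
      TS.Fbar a lm lm c ν x * TS.F x lm lm d c m * TS.F a lm m d x k
      = ∑ h ∈ TS.sN lm lm,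
          (TS.Fbar a lm lm c ν x * TS.F a lm lm c x h)
            * (TS.F a h lm d c k * TS.F lm lm lm k h m) := by
    intro x
    rw [mul_assoc, pent x, Finset.mul_sum]
    exact Finset.sum_congr rfl fun h _ => by ring
  rw [Finset.sum_congr rfl fun x _ => step x, Finset.sum_comm]
  have inner : ∀ h : I,
      (∑ x ∈ TS.sN a lm, (TS.Fbar a lm lm c ν x * TS.F a lm lm c x h)
        * (TS.F a h lm d c k * TS.F lm lm lm k h m))
      = ((if h = ν then (1 : R) else 0) * (TS.N lm lm h : R) * (TS.N a h c : R))
          * (TS.F a h lm d c k * TS.F lm lm lm k h m) := by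
    intro h
    rw [← Finset.sum_mul, TS.sum_Fbar_F (fun x hx => TS.mem_sN.2 hx) lm c h ν]
  rw [Finset.sum_congr rfl fun h _ => inner h]
  by_cases hν : TS.N lm lm ν = 0
  · have hz : ∀ h ∈ TS.sN lm lm,
        ((if h = ν then (1 : R) else 0) * (TS.N lm lm h : R) * (TS.N a h c : R))
          * (TS.F a h lm d c k * TS.F lm lm lm k h m) = 0 := by
      intro h _
      by_cases hhv : h = ν
      · subst hhv; rw [hν]; simp
      · simp [hhv]
    rw [Finset.sum_eq_zero hz, hν]
    simp
  · rw [Finset.sum_eq_single_of_mem ν (TS.mem_sN.2 hν)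
      (fun h _ hh => by simp [hh])]
    simp only [eq_self_iff_true, if_true, true_and, one_mul]
    try ring

/-- Contraction `(B̄)`: the `V`-side factor for the `i+1` case. -/
lemma Bbarfact (a c' d m k : I) :
    ∑ x ∈ TS.sN a lm, TS.F a lm lm c' x ν * TS.Fbar x lm lm d m c' * TS.Fbar a lm m d k x
      = (TS.N lm lm ν : R) * (TS.N a ν c' : R)
          * (TS.Fbar lm lm lm k m ν * TS.Fbar a ν lm d k c') := by
  have pent : ∀ x : I, TS.Fbar a lm m d k x * TS.Fbar x lm lm d m c'
      = ∑ h ∈ TS.sN lm lm,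
          TS.Fbar lm lm lm k m h * TS.Fbar a h lm d k c' * TS.Fbar a lm lm c' h x :=
    fun x => (TS.pentagon_bar a lm lm lm d x c' k m).symm
  have step : ∀ x : I,
      TS.F a lm lm c' x ν * TS.Fbar x lm lm d m c' * TS.Fbar a lm m d k x
      = ∑ h ∈ TS.sN lm lm,
          (TS.Fbar lm lm lm k m h * TS.Fbar a h lm d k c')
            * (TS.Fbar a lm lm c' h x * TS.F a lm lm c' x ν) := by
    intro x
    rw [show TS.F a lm lm c' x ν * TS.Fbar x lm lm d m c' * TS.Fbar a lm m d k x
        = (TS.Fbar a lm m d k x * TS.Fbar x lm lm d m c') * TS.F a lm lm c' x ν from by ring,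
      pent x, Finset.sum_mul]
    exact Finset.sum_congr rfl fun h _ => by ring
  rw [Finset.sum_congr rfl fun x _ => step x, Finset.sum_comm]
  have inner : ∀ h : I,
      (∑ x ∈ TS.sN a lm, (TS.Fbar lm lm lm k m h * TS.Fbar a h lm d k c')
        * (TS.Fbar a lm lm c' h x * TS.F a lm lm c' x ν))
      = (TS.Fbar lm lm lm k m h * TS.Fbar a h lm d k c')
          * ((if ν = h then (1 : R) else 0) * (TS.N lm lm ν : R) * (TS.N a ν c' : R)) := by
    intro h
    rw [← Finset.mul_sum, TS.sum_Fbar_F (fun x hx => TS.mem_sN.2 hx) lm c' ν h]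
  rw [Finset.sum_congr rfl fun h _ => inner h]
  by_cases hν : TS.N lm lm ν = 0
  · rw [Finset.sum_eq_zero fun h _ => by rw [hν]; simp, hν]
    simp
  · rw [Finset.sum_eq_single_of_mem ν (TS.mem_sN.2 hν)
      (fun h _ hh => by simp [Ne.symm hh])]
    simp only [eq_self_iff_true, if_true, true_and, one_mul]
    try ring

end Key

end TensorSystem
namespace TensorSystem

section Key2

variable {R : Type*} [CommRing R] {I : Type*} (TS : TensorSystem R I) (lm ν φ : I)

private lemma Nsq (a b c : I) : (TS.N a b c : R) * (TS.N a b c : R) = (TS.N a b c : R) := by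
  rcases TS.N_zero_or_one a b c with h | h <;> rw [h] <;> simp

/-- The key identity for `p_i R_{i+1} p_i` at fixed intermediate channel `m`. -/
lemma key1m (hone : TS.ActsOneDimLeft ν lm) (hφ : TS.N ν lm φ = 1) (a c c' d m : I) :
    ∑ x ∈ TS.sN a lm,
        TS.F a lm lm c' x ν * TS.Fbar x lm lm d m c' * TS.F x lm lm d c m
          * TS.Fbar a lm lm c ν x
      = (TS.F lm lm lm φ ν m * TS.Fbar lm lm lm φ m ν)
          * ((if c = c' then (1 : R) else 0) * (TS.N a ν c : R) * (TS.N c lm d : R)) := by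
  classical
  have factored :
      (∑ k ∈ TS.sN lm m,
        (∑ x ∈ TS.sN a lm,
          (TS.Fbar a lm lm c ν x * TS.F x lm lm d c m) * TS.F a lm m d x k)
        * (∑ x ∈ TS.sN a lm,
          (TS.F a lm lm c' x ν * TS.Fbar x lm lm d m c') * TS.Fbar a lm m d k x))
      = ∑ x ∈ TS.sN a lm,
          TS.F a lm lm c' x ν * TS.Fbar x lm lm d m c' * TS.F x lm lm d c m
            * TS.Fbar a lm lm c ν x := by
    calc
      (∑ k ∈ TS.sN lm m,
        (∑ x ∈ TS.sN a lm,
          (TS.Fbar a lm lm c ν x * TS.F x lm lm d c m) * TS.F a lm m d x k)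
        * (∑ x ∈ TS.sN a lm,
          (TS.F a lm lm c' x ν * TS.Fbar x lm lm d m c') * TS.Fbar a lm m d k x))
          = ∑ k ∈ TS.sN lm m, ∑ x ∈ TS.sN a lm, ∑ x' ∈ TS.sN a lm,
              ((TS.Fbar a lm lm c ν x * TS.F x lm lm d c m)
                * (TS.F a lm lm c' x' ν * TS.Fbar x' lm lm d m c'))
              * (TS.F a lm m d x k * TS.Fbar a lm m d k x') := by
            refine Finset.sum_congr rfl fun k _ => ?_
            rw [Finset.sum_mul_sum]
            exact Finset.sum_congr rfl fun x _ => Finset.sum_congr rfl fun x' _ => by ring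
      _ = ∑ x ∈ TS.sN a lm, ∑ x' ∈ TS.sN a lm,
              ((TS.Fbar a lm lm c ν x * TS.F x lm lm d c m)
                * (TS.F a lm lm c' x' ν * TS.Fbar x' lm lm d m c'))
              * (∑ k ∈ TS.sN lm m, TS.F a lm m d x k * TS.Fbar a lm m d k x') := by
            rw [Finset.sum_comm]
            refine Finset.sum_congr rfl fun x _ => ?_
            rw [Finset.sum_comm]
            exact Finset.sum_congr rfl fun x' _ => by rw [Finset.mul_sum]
      _ = ∑ x ∈ TS.sN a lm, ∑ x' ∈ TS.sN a lm,
              ((TS.Fbar a lm lm c ν x * TS.F x lm lm d c m)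
                * (TS.F a lm lm c' x' ν * TS.Fbar x' lm lm d m c'))
              * ((if x = x' then (1 : R) else 0) * (TS.N a lm x : R) * (TS.N x m d : R)) := by
            refine Finset.sum_congr rfl fun x _ => Finset.sum_congr rfl fun x' _ => ?_
            rw [TS.sum_F_Fbar (fun y hy => TS.mem_sN.2 hy) a d x x']
      _ = ∑ x ∈ TS.sN a lm,
              ((TS.Fbar a lm lm c ν x * TS.F x lm lm d c m)
                * (TS.F a lm lm c' x ν * TS.Fbar x lm lm d m c'))
              * ((TS.N a lm x : R) * (TS.N x m d : R)) := by
            refine Finset.sum_congr rfl fun x hx => ?_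
            rw [Finset.sum_eq_single_of_mem x hx (fun x' _ hx' => by simp [Ne.symm hx'])]
            simp
      _ = ∑ x ∈ TS.sN a lm,
          TS.F a lm lm c' x ν * TS.Fbar x lm lm d m c' * TS.F x lm lm d c m
            * TS.Fbar a lm lm c ν x := by
            refine Finset.sum_congr rfl fun x _ => ?_
            have e1 := TS.Fbar_mulN₁ a lm lm c x ν
            have e2 := TS.F_mulN₃ x lm lm d c m
            linear_combination (TS.F x lm lm d c m * TS.F a lm lm c' x ν
                * TS.Fbar x lm lm d m c' * (TS.N x m d : R)) * e1
              + (TS.Fbar a lm lm c ν x * TS.F a lm lm c' x ν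
                * TS.Fbar x lm lm d m c') * e2
  rw [← factored]
  rw [Finset.sum_congr rfl fun k _ => by
    rw [TS.Bfact lm ν a c d m k, TS.Bbarfact lm ν a c' d m k]]
  by_cases hφm : TS.N lm m φ = 0
  · refine (Finset.sum_eq_zero fun k hk => ?_).trans ?_
    · have hkφ : k ≠ φ := fun h => (TS.mem_sN.1 hk) (by rw [h]; exact hφm)
      rw [TS.F_zero₂ a d c (TS.oneDim lm ν φ hone hφ k hkφ)]
      ring
    · rw [TS.F_zero₃ lm lm ν hφm]
      ring
  · rw [Finset.sum_eq_single_of_mem φ (TS.mem_sN.2 hφm) fun k hk hkφ => by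
      rw [TS.F_zero₂ a d c (TS.oneDim lm ν φ hone hφ k hkφ)]; ring]
    have e1 := TS.F_mulN₁ lm lm lm φ ν m
    have e2 := TS.Fbar_mulN₁ lm lm lm φ ν m
    have e3 := TS.F_mulN₁ a ν lm d c φ
    have e4 := TS.Fbar_mulN₁ a ν lm d c' φ
    have e5 := TS.Ffi lm ν φ hone hφ a c c' d
    linear_combination (TS.Fbar lm lm lm φ m ν * (TS.N lm lm ν : R) * (TS.N a ν c : R)
        * (TS.N a ν c' : R) * TS.F a ν lm d c φ * TS.Fbar a ν lm d φ c') * e1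
      + (TS.F lm lm lm φ ν m * (TS.N a ν c : R) * (TS.N a ν c' : R)
        * TS.F a ν lm d c φ * TS.Fbar a ν lm d φ c') * e2
      + (TS.F lm lm lm φ ν m * TS.Fbar lm lm lm φ m ν * (TS.N a ν c' : R)
        * TS.Fbar a ν lm d φ c') * e3
      + (TS.F lm lm lm φ ν m * TS.Fbar lm lm lm φ m ν * TS.F a ν lm d c φ) * e4
      + (TS.F lm lm lm φ ν m * TS.Fbar lm lm lm φ m ν) * e5

end Key2

end TensorSystem
namespace TensorSystem

section Key3

variable {R : Type*} [CommRing R] {I : Type*} (TS : TensorSystem R I) (lm ν φ : I)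

/-- `(A')`: pentagon-derived expansion of a product of two F's. -/
lemma Aprime (a b d k m y : I) :
    TS.F a lm lm y b m * TS.F a m lm d y k
      = ∑ l ∈ TS.sN lm lm,
          (TS.F b lm lm d y l * TS.F a lm l d b k) * TS.Fbar lm lm lm k l m := by
  have pent : ∀ l : I,
      TS.F b lm lm d y l * TS.F a lm l d b k
      = ∑ h ∈ TS.sN lm lm, TS.F a lm lm y b h * TS.F a h lm d y k * TS.F lm lm lm k h l :=
    fun l => (TS.sum_pentagon (b := lm) (c := lm) (fun x hx => TS.mem_sN.2 hx)
      a lm d b y k l).symm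
  have s1 : (∑ l ∈ TS.sN lm lm,
        (TS.F b lm lm d y l * TS.F a lm l d b k) * TS.Fbar lm lm lm k l m)
      = ∑ h ∈ TS.sN lm lm, (TS.F a lm lm y b h * TS.F a h lm d y k)
          * ((if h = m then (1 : R) else 0) * (TS.N lm lm h : R) * (TS.N h lm k : R)) := by
    calc (∑ l ∈ TS.sN lm lm,
        (TS.F b lm lm d y l * TS.F a lm l d b k) * TS.Fbar lm lm lm k l m)
        = ∑ l ∈ TS.sN lm lm, ∑ h ∈ TS.sN lm lm,
            (TS.F a lm lm y b h * TS.F a h lm d y k)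
              * (TS.F lm lm lm k h l * TS.Fbar lm lm lm k l m) := by
          refine Finset.sum_congr rfl fun l _ => ?_
          rw [pent l, Finset.sum_mul]
          exact Finset.sum_congr rfl fun h _ => by ring
      _ = ∑ h ∈ TS.sN lm lm, ∑ l ∈ TS.sN lm lm,
            (TS.F a lm lm y b h * TS.F a h lm d y k)
              * (TS.F lm lm lm k h l * TS.Fbar lm lm lm k l m) := Finset.sum_comm
      _ = ∑ h ∈ TS.sN lm lm, (TS.F a lm lm y b h * TS.F a h lm d y k)
            * ((if h = m then (1 : R) else 0) * (TS.N lm lm h : R) * (TS.N h lm k : R)) := by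
          refine Finset.sum_congr rfl fun h _ => ?_
          rw [← Finset.mul_sum, TS.sum_F_Fbar (fun x hx => TS.mem_sN.2 hx) lm k h m]
  rw [s1]
  by_cases hm : TS.N lm lm m = 0
  · rw [TS.F_zero₂ a y b hm, zero_mul]
    refine (Finset.sum_eq_zero fun h _ => ?_).symm
    by_cases hhm : h = m
    · subst hhm; rw [hm]; simp
    · simp [hhm]
  · rw [Finset.sum_eq_single_of_mem m (TS.mem_sN.2 hm) fun h _ hh => by simp [hh]]
    simp only [eq_self_iff_true, if_true, one_mul]
    have e1 := TS.F_mulN₂ a lm lm y b m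
    have e2 := TS.F_mulN₂ a m lm d y k
    linear_combination (-(TS.F a m lm d y k * (TS.N m lm k : R))) * e1
      - (TS.F a lm lm y b m) * e2

/-- `(Ā')`: pentagon-derived expansion of a product of two Fbar's. -/
lemma Abarprime (a b' d k m y : I) :
    TS.Fbar a m lm d k y * TS.Fbar a lm lm y m b'
      = ∑ l ∈ TS.sN lm lm,
          (TS.F lm lm lm k m l * TS.Fbar a lm l d k b') * TS.Fbar b' lm lm d l y := by
  have pent : ∀ l : I,
      TS.Fbar a lm l d k b' * TS.Fbar b' lm lm d l y
      = ∑ h ∈ TS.sN lm lm,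
          TS.Fbar lm lm lm k l h * TS.Fbar a h lm d k y * TS.Fbar a lm lm y h b' :=
    fun l => (TS.pentagon_bar a lm lm lm d b' y k l).symm
  have s1 : (∑ l ∈ TS.sN lm lm,
        (TS.F lm lm lm k m l * TS.Fbar a lm l d k b') * TS.Fbar b' lm lm d l y)
      = ∑ h ∈ TS.sN lm lm, (TS.Fbar a h lm d k y * TS.Fbar a lm lm y h b')
          * ((if m = h then (1 : R) else 0) * (TS.N lm lm m : R) * (TS.N m lm k : R)) := by
    calc (∑ l ∈ TS.sN lm lm,
        (TS.F lm lm lm k m l * TS.Fbar a lm l d k b') * TS.Fbar b' lm lm d l y)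
        = ∑ l ∈ TS.sN lm lm, TS.F lm lm lm k m l
            * (TS.Fbar a lm l d k b' * TS.Fbar b' lm lm d l y) := by
          exact Finset.sum_congr rfl fun l _ => by ring
      _ = ∑ l ∈ TS.sN lm lm, ∑ h ∈ TS.sN lm lm,
            (TS.Fbar a h lm d k y * TS.Fbar a lm lm y h b')
              * (TS.F lm lm lm k m l * TS.Fbar lm lm lm k l h) := by
          refine Finset.sum_congr rfl fun l _ => ?_
          rw [pent l, Finset.mul_sum]
          exact Finset.sum_congr rfl fun h _ => by ring
      _ = ∑ h ∈ TS.sN lm lm, ∑ l ∈ TS.sN lm lm,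
            (TS.Fbar a h lm d k y * TS.Fbar a lm lm y h b')
              * (TS.F lm lm lm k m l * TS.Fbar lm lm lm k l h) := Finset.sum_comm
      _ = ∑ h ∈ TS.sN lm lm, (TS.Fbar a h lm d k y * TS.Fbar a lm lm y h b')
            * ((if m = h then (1 : R) else 0) * (TS.N lm lm m : R) * (TS.N m lm k : R)) := by
          refine Finset.sum_congr rfl fun h _ => ?_
          rw [← Finset.mul_sum, TS.sum_F_Fbar (fun x hx => TS.mem_sN.2 hx) lm k m h]
  rw [s1]
  by_cases hm : TS.N lm lm m = 0
  · rw [TS.Fbar_zero₂ a y b' hm, mul_zero]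
    refine (Finset.sum_eq_zero fun h _ => ?_).symm
    rw [hm]; simp
  · rw [Finset.sum_eq_single_of_mem m (TS.mem_sN.2 hm) fun h _ hh => by simp [Ne.symm hh]]
    simp only [eq_self_iff_true, if_true, one_mul]
    have e1 := TS.Fbar_mulN₂ a lm lm y b' m
    have e2 := TS.Fbar_mulN₂ a m lm d y k
    linear_combination (-(TS.Fbar a m lm d k y * (TS.N m lm k : R))) * e1
      - (TS.Fbar a lm lm y m b') * e2

/-- Contraction `(P')`: the `U`-side factor for the `i-1` case. -/
lemma Pprime {b : I} {s : Finset I} (hs : ∀ y, TS.N b lm y ≠ 0 → y ∈ s) (a d m k : I) :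
    ∑ y ∈ s, TS.Fbar b lm lm d ν y * (TS.F a lm lm y b m * TS.F a m lm d y k)
      = (TS.N lm lm ν : R) * (TS.N b ν d : R)
          * (TS.F a lm ν d b k * TS.Fbar lm lm lm k ν m) := by
  have s1 : (∑ y ∈ s, TS.Fbar b lm lm d ν y * (TS.F a lm lm y b m * TS.F a m lm d y k))
      = ∑ l ∈ TS.sN lm lm,
          ((if l = ν then (1 : R) else 0) * (TS.N lm lm l : R) * (TS.N b l d : R))
            * (TS.F a lm l d b k * TS.Fbar lm lm lm k l m) := by
    calc (∑ y ∈ s, TS.Fbar b lm lm d ν y * (TS.F a lm lm y b m * TS.F a m lm d y k))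
        = ∑ y ∈ s, ∑ l ∈ TS.sN lm lm,
            (TS.Fbar b lm lm d ν y * TS.F b lm lm d y l)
              * (TS.F a lm l d b k * TS.Fbar lm lm lm k l m) := by
          refine Finset.sum_congr rfl fun y _ => ?_
          rw [TS.Aprime lm a b d k m y, Finset.mul_sum]
          exact Finset.sum_congr rfl fun l _ => by ring
      _ = ∑ l ∈ TS.sN lm lm, ∑ y ∈ s,
            (TS.Fbar b lm lm d ν y * TS.F b lm lm d y l)
              * (TS.F a lm l d b k * TS.Fbar lm lm lm k l m) := Finset.sum_comm
      _ = ∑ l ∈ TS.sN lm lm,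
            ((if l = ν then (1 : R) else 0) * (TS.N lm lm l : R) * (TS.N b l d : R))
              * (TS.F a lm l d b k * TS.Fbar lm lm lm k l m) := by
          refine Finset.sum_congr rfl fun l _ => ?_
          rw [← Finset.sum_mul, TS.sum_Fbar_F hs lm d l ν]
  rw [s1]
  by_cases hν : TS.N lm lm ν = 0
  · refine (Finset.sum_eq_zero fun l _ => ?_).trans ?_
    · by_cases hlv : l = ν
      · subst hlv; rw [hν]; simp
      · simp [hlv]
    · rw [hν]; simp
  · rw [Finset.sum_eq_single_of_mem ν (TS.mem_sN.2 hν) fun l _ hl => by simp [hl]]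
    simp only [eq_self_iff_true, if_true, one_mul]
    try ring

/-- Contraction `(Q')`: the `V`-side factor for the `i-1` case. -/
lemma Qprime {b' : I} {s : Finset I} (hs : ∀ y, TS.N b' lm y ≠ 0 → y ∈ s) (a d m k : I) :
    ∑ y ∈ s, TS.F b' lm lm d y ν * (TS.Fbar a m lm d k y * TS.Fbar a lm lm y m b')
      = (TS.N lm lm ν : R) * (TS.N b' ν d : R)
          * (TS.F lm lm lm k m ν * TS.Fbar a lm ν d k b') := by
  have s1 : (∑ y ∈ s, TS.F b' lm lm d y ν * (TS.Fbar a m lm d k y * TS.Fbar a lm lm y m b'))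
      = ∑ l ∈ TS.sN lm lm,
          ((if ν = l then (1 : R) else 0) * (TS.N lm lm ν : R) * (TS.N b' ν d : R))
            * (TS.F lm lm lm k m l * TS.Fbar a lm l d k b') := by
    calc (∑ y ∈ s, TS.F b' lm lm d y ν * (TS.Fbar a m lm d k y * TS.Fbar a lm lm y m b'))
        = ∑ y ∈ s, ∑ l ∈ TS.sN lm lm,
            (TS.Fbar b' lm lm d l y * TS.F b' lm lm d y ν)
              * (TS.F lm lm lm k m l * TS.Fbar a lm l d k b') := by
          refine Finset.sum_congr rfl fun y _ => ?_
          rw [TS.Abarprime lm a b' d k m y, Finset.mul_sum]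
          exact Finset.sum_congr rfl fun l _ => by ring
      _ = ∑ l ∈ TS.sN lm lm, ∑ y ∈ s,
            (TS.Fbar b' lm lm d l y * TS.F b' lm lm d y ν)
              * (TS.F lm lm lm k m l * TS.Fbar a lm l d k b') := Finset.sum_comm
      _ = ∑ l ∈ TS.sN lm lm,
            ((if ν = l then (1 : R) else 0) * (TS.N lm lm ν : R) * (TS.N b' ν d : R))
              * (TS.F lm lm lm k m l * TS.Fbar a lm l d k b') := by
          refine Finset.sum_congr rfl fun l _ => ?_
          rw [← Finset.sum_mul, TS.sum_Fbar_F hs lm d ν l]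
  rw [s1]
  by_cases hν : TS.N lm lm ν = 0
  · refine (Finset.sum_eq_zero fun l _ => by rw [hν]; simp).trans ?_
    rw [hν]; simp
  · rw [Finset.sum_eq_single_of_mem ν (TS.mem_sN.2 hν) fun l _ hl => by simp [Ne.symm hl]]
    simp only [eq_self_iff_true, if_true, one_mul]
    try ring

end Key3

end TensorSystem
namespace TensorSystem

section Key4

variable {R : Type*} [CommRing R] {I : Type*} (TS : TensorSystem R I) (lm ν φ : I)

/-- The key identity for `p_i R_{i-1} p_i` at fixed intermediate channel `m`. -/
lemma key2m (hone : TS.ActsOneDimLeft ν lm) (hφ : TS.N ν lm φ = 1)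
    (hsymm : ∀ x y z : I, TS.N x y z = TS.N y x z) (a b b' d m : I) {s : Finset I}
    (h1 : ∀ y, TS.N b lm y ≠ 0 → y ∈ s) (h2 : ∀ y, TS.N b' lm y ≠ 0 → y ∈ s) :
    ∑ y ∈ s,
        TS.F b' lm lm d y ν * TS.Fbar a lm lm y m b' * TS.F a lm lm y b m
          * TS.Fbar b lm lm d ν y
      = (TS.F lm lm lm φ m ν * TS.Fbar lm lm lm φ ν m)
          * ((if b = b' then (1 : R) else 0) * (TS.N a lm b : R) * (TS.N b ν d : R)) := by
  classical
  have factored :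
      (∑ k ∈ TS.sN m lm,
        (∑ y ∈ s, TS.Fbar b lm lm d ν y * (TS.F a lm lm y b m * TS.F a m lm d y k))
        * (∑ y ∈ s, TS.F b' lm lm d y ν * (TS.Fbar a m lm d k y * TS.Fbar a lm lm y m b')))
      = ∑ y ∈ s,
          TS.F b' lm lm d y ν * TS.Fbar a lm lm y m b' * TS.F a lm lm y b m
            * TS.Fbar b lm lm d ν y := by
    calc
      (∑ k ∈ TS.sN m lm,
        (∑ y ∈ s, TS.Fbar b lm lm d ν y * (TS.F a lm lm y b m * TS.F a m lm d y k))
        * (∑ y ∈ s, TS.F b' lm lm d y ν * (TS.Fbar a m lm d k y * TS.Fbar a lm lm y m b')))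
          = ∑ k ∈ TS.sN m lm, ∑ y ∈ s, ∑ y' ∈ s,
              ((TS.Fbar b lm lm d ν y * TS.F a lm lm y b m)
                * (TS.F b' lm lm d y' ν * TS.Fbar a lm lm y' m b'))
              * (TS.F a m lm d y k * TS.Fbar a m lm d k y') := by
            refine Finset.sum_congr rfl fun k _ => ?_
            rw [Finset.sum_mul_sum]
            exact Finset.sum_congr rfl fun y _ => Finset.sum_congr rfl fun y' _ => by ring
      _ = ∑ y ∈ s, ∑ y' ∈ s,
              ((TS.Fbar b lm lm d ν y * TS.F a lm lm y b m)
                * (TS.F b' lm lm d y' ν * TS.Fbar a lm lm y' m b'))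
              * (∑ k ∈ TS.sN m lm, TS.F a m lm d y k * TS.Fbar a m lm d k y') := by
            rw [Finset.sum_comm]
            refine Finset.sum_congr rfl fun y _ => ?_
            rw [Finset.sum_comm]
            exact Finset.sum_congr rfl fun y' _ => by rw [Finset.mul_sum]
      _ = ∑ y ∈ s, ∑ y' ∈ s,
              ((TS.Fbar b lm lm d ν y * TS.F a lm lm y b m)
                * (TS.F b' lm lm d y' ν * TS.Fbar a lm lm y' m b'))
              * ((if y = y' then (1 : R) else 0) * (TS.N a m y : R) * (TS.N y lm d : R)) := by
            refine Finset.sum_congr rfl fun y _ => Finset.sum_congr rfl fun y' _ => ?_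
            rw [TS.sum_F_Fbar (fun x hx => TS.mem_sN.2 hx) a d y y']
      _ = ∑ y ∈ s,
              ((TS.Fbar b lm lm d ν y * TS.F a lm lm y b m)
                * (TS.F b' lm lm d y ν * TS.Fbar a lm lm y m b'))
              * ((TS.N a m y : R) * (TS.N y lm d : R)) := by
            refine Finset.sum_congr rfl fun y hy => ?_
            rw [Finset.sum_eq_single_of_mem y hy (fun y' _ hy' => by simp [Ne.symm hy'])]
            simp
      _ = ∑ y ∈ s,
          TS.F b' lm lm d y ν * TS.Fbar a lm lm y m b' * TS.F a lm lm y b m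
            * TS.Fbar b lm lm d ν y := by
            refine Finset.sum_congr rfl fun y _ => ?_
            have e1 := TS.F_mulN₃ a lm lm y b m
            have e2 := TS.Fbar_mulN₄ b lm lm d y ν
            linear_combination (TS.Fbar b lm lm d ν y * TS.F b' lm lm d y ν
                * TS.Fbar a lm lm y m b' * (TS.N y lm d : R)) * e1
              + (TS.F a lm lm y b m * TS.F b' lm lm d y ν
                * TS.Fbar a lm lm y m b') * e2
  rw [← factored]
  rw [Finset.sum_congr rfl fun k _ => by
    rw [TS.Pprime lm ν h1 a d m k, TS.Qprime lm ν h2 a d m k]]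
  by_cases hφm : TS.N m lm φ = 0
  · refine (Finset.sum_eq_zero fun k hk => ?_).trans ?_
    · have hkφ : k ≠ φ := fun h => (TS.mem_sN.1 hk) (by rw [h]; exact hφm)
      have : TS.N lm ν k = 0 := by
        rw [hsymm lm ν k]; exact TS.oneDim lm ν φ hone hφ k hkφ
      rw [TS.F_zero₂ a d b this]
      ring
    · rw [TS.F_zero₄ lm lm ν hφm]
      ring
  · rw [Finset.sum_eq_single_of_mem φ (TS.mem_sN.2 hφm) fun k hk hkφ => by
      rw [TS.F_zero₂ a d b (by rw [hsymm lm ν k]; exact TS.oneDim lm ν φ hone hφ k hkφ)]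
      ring]
    have e1 := TS.Fbar_mulN₂ lm lm lm φ m ν
    have e2 := TS.F_mulN₂ lm lm lm φ m ν
    have e3 := TS.F_mulN₄ a lm ν d b φ
    have e4 := TS.Fbar_mulN₄ a lm ν d b' φ
    have e5 := TS.Ffi' lm ν φ hone hφ hsymm a b b' d
    linear_combination (TS.F lm lm lm φ m ν * (TS.N lm lm ν : R) * (TS.N b ν d : R)
        * (TS.N b' ν d : R) * TS.F a lm ν d b φ * TS.Fbar a lm ν d φ b') * e1
      + (TS.Fbar lm lm lm φ ν m * (TS.N b ν d : R) * (TS.N b' ν d : R)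
        * TS.F a lm ν d b φ * TS.Fbar a lm ν d φ b') * e2
      + (TS.F lm lm lm φ m ν * TS.Fbar lm lm lm φ ν m * (TS.N b' ν d : R)
        * TS.Fbar a lm ν d φ b') * e3
      + (TS.F lm lm lm φ m ν * TS.Fbar lm lm lm φ ν m * TS.F a lm ν d b φ) * e4
      + (TS.F lm lm lm φ m ν * TS.Fbar lm lm lm φ ν m) * e5

/-- The two one-dimensional braiding eigenvalues agree (uses the hexagon). -/
lemma scal (hφ : TS.N ν lm φ = 1)
    (hsymm : ∀ x y z : I, TS.N x y z = TS.N y x z) (Rf Rp : I → R)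
    (hex : ∀ e g : I, Rf e * TS.F lm lm lm φ e g * Rf g
      = ∑ᶠ f, TS.F lm lm lm φ e f * Rp f * TS.F lm lm lm φ f g)
    (y : R) (hy : Rf ν * y = (TS.N lm lm ν : R)) :
    ∑ m ∈ TS.sN lm lm, Rf m * (TS.F lm lm lm φ ν m * TS.Fbar lm lm lm φ m ν)
      = ∑ m ∈ TS.sN lm lm, Rf m * (TS.F lm lm lm φ m ν * TS.Fbar lm lm lm φ ν m) := by
  classical
  by_cases hν : TS.N lm lm ν = 0
  · rw [Finset.sum_eq_zero fun m _ => by rw [TS.F_zero₁ lm φ m hν]; ring,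
      Finset.sum_eq_zero fun m _ => by rw [TS.F_zero₂ lm φ m hν]; ring]
  have hexFS : ∀ e g : I, Rf e * TS.F lm lm lm φ e g * Rf g
      = ∑ f ∈ TS.sN lm lm, TS.F lm lm lm φ e f * Rp f * TS.F lm lm lm φ f g := by
    intro e g
    rw [hex e g]
    refine finsum_eq_sum_of_support_subset _ fun f hf => ?_
    simp only [Finset.coe_sort_coe, Finset.mem_coe, mem_sN]
    intro hN
    simp [Function.mem_support, TS.F_zero₂ lm φ e hN] at hf
  have C1 :
      (∑ m ∈ TS.sN lm lm, Rf m * (TS.F lm lm lm φ m ν * TS.Fbar lm lm lm φ ν m)) * Rf ν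
      = ((TS.N lm lm ν : R) * (TS.N lm ν φ : R)) * (Rp ν * TS.F lm lm lm φ ν ν) := by
    calc (∑ m ∈ TS.sN lm lm, Rf m * (TS.F lm lm lm φ m ν * TS.Fbar lm lm lm φ ν m)) * Rf ν
        = ∑ e ∈ TS.sN lm lm, TS.Fbar lm lm lm φ ν e
            * (Rf e * TS.F lm lm lm φ e ν * Rf ν) := by
          rw [Finset.sum_mul]
          exact Finset.sum_congr rfl fun e _ => by ring
      _ = ∑ e ∈ TS.sN lm lm, ∑ f ∈ TS.sN lm lm,
            (TS.Fbar lm lm lm φ ν e * TS.F lm lm lm φ e f)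
              * (Rp f * TS.F lm lm lm φ f ν) := by
          refine Finset.sum_congr rfl fun e _ => ?_
          rw [hexFS e ν, Finset.mul_sum]
          exact Finset.sum_congr rfl fun f _ => by ring
      _ = ∑ f ∈ TS.sN lm lm,
            (∑ e ∈ TS.sN lm lm, TS.Fbar lm lm lm φ ν e * TS.F lm lm lm φ e f)
              * (Rp f * TS.F lm lm lm φ f ν) := by
          rw [Finset.sum_comm]
          exact Finset.sum_congr rfl fun f _ => by rw [Finset.sum_mul]
      _ = ∑ f ∈ TS.sN lm lm,
            ((if f = ν then (1 : R) else 0) * (TS.N lm lm f : R) * (TS.N lm f φ : R))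
              * (Rp f * TS.F lm lm lm φ f ν) := by
          refine Finset.sum_congr rfl fun f _ => ?_
          rw [TS.sum_Fbar_F (fun x hx => TS.mem_sN.2 hx) lm φ f ν]
      _ = ((TS.N lm lm ν : R) * (TS.N lm ν φ : R)) * (Rp ν * TS.F lm lm lm φ ν ν) := by
          rw [Finset.sum_eq_single_of_mem ν (TS.mem_sN.2 hν) fun f _ hf => by simp [hf]]
          simp only [eq_self_iff_true, if_true, one_mul]
          try ring
  have C2 :
      (∑ m ∈ TS.sN lm lm, Rf m * (TS.F lm lm lm φ ν m * TS.Fbar lm lm lm φ m ν)) * Rf ν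
      = ((TS.N lm lm ν : R) * (TS.N ν lm φ : R)) * (Rp ν * TS.F lm lm lm φ ν ν) := by
    calc (∑ m ∈ TS.sN lm lm, Rf m * (TS.F lm lm lm φ ν m * TS.Fbar lm lm lm φ m ν)) * Rf ν
        = ∑ g ∈ TS.sN lm lm, (Rf ν * TS.F lm lm lm φ ν g * Rf g)
            * TS.Fbar lm lm lm φ g ν := by
          rw [Finset.sum_mul]
          exact Finset.sum_congr rfl fun g _ => by ring
      _ = ∑ g ∈ TS.sN lm lm, ∑ f ∈ TS.sN lm lm,
            (TS.F lm lm lm φ ν f * Rp f)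
              * (TS.F lm lm lm φ f g * TS.Fbar lm lm lm φ g ν) := by
          refine Finset.sum_congr rfl fun g _ => ?_
          rw [hexFS ν g, Finset.sum_mul]
          exact Finset.sum_congr rfl fun f _ => by ring
      _ = ∑ f ∈ TS.sN lm lm,
            (TS.F lm lm lm φ ν f * Rp f)
              * (∑ g ∈ TS.sN lm lm, TS.F lm lm lm φ f g * TS.Fbar lm lm lm φ g ν) := by
          rw [Finset.sum_comm]
          exact Finset.sum_congr rfl fun f _ => by rw [Finset.mul_sum]
      _ = ∑ f ∈ TS.sN lm lm,
            (TS.F lm lm lm φ ν f * Rp f)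
              * ((if f = ν then (1 : R) else 0) * (TS.N lm lm f : R) * (TS.N f lm φ : R)) := by
          refine Finset.sum_congr rfl fun f _ => ?_
          rw [TS.sum_F_Fbar (fun x hx => TS.mem_sN.2 hx) lm φ f ν]
      _ = ((TS.N lm lm ν : R) * (TS.N ν lm φ : R)) * (Rp ν * TS.F lm lm lm φ ν ν) := by
          rw [Finset.sum_eq_single_of_mem ν (TS.mem_sN.2 hν) fun f _ hf => by simp [hf]]
          simp only [eq_self_iff_true, if_true, one_mul]
          try ring
  have heq : (∑ m ∈ TS.sN lm lm, Rf m * (TS.F lm lm lm φ ν m * TS.Fbar lm lm lm φ m ν))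
        * (TS.N lm lm ν : R)
      = (∑ m ∈ TS.sN lm lm, Rf m * (TS.F lm lm lm φ m ν * TS.Fbar lm lm lm φ ν m))
        * (TS.N lm lm ν : R) := by
    rw [hsymm lm ν φ] at C1
    have := congrArg (· * y) (C2.trans C1.symm)
    calc (∑ m ∈ TS.sN lm lm, Rf m * (TS.F lm lm lm φ ν m * TS.Fbar lm lm lm φ m ν))
          * (TS.N lm lm ν : R)
        = (∑ m ∈ TS.sN lm lm, Rf m * (TS.F lm lm lm φ ν m * TS.Fbar lm lm lm φ m ν))
            * Rf ν * y := by rw [mul_assoc, hy]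
      _ = (∑ m ∈ TS.sN lm lm, Rf m * (TS.F lm lm lm φ m ν * TS.Fbar lm lm lm φ ν m))
            * Rf ν * y := this
      _ = _ := by rw [mul_assoc, hy]
  calc ∑ m ∈ TS.sN lm lm, Rf m * (TS.F lm lm lm φ ν m * TS.Fbar lm lm lm φ m ν)
      = (∑ m ∈ TS.sN lm lm, Rf m * (TS.F lm lm lm φ ν m * TS.Fbar lm lm lm φ m ν))
          * (TS.N lm lm ν : R) := by
        rw [Finset.sum_mul]
        refine (Finset.sum_congr rfl fun m _ => ?_).symm
        have e1 := TS.F_mulN₁ lm lm lm φ ν m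
        linear_combination (TS.Fbar lm lm lm φ m ν * Rf m) * e1
    _ = (∑ m ∈ TS.sN lm lm, Rf m * (TS.F lm lm lm φ m ν * TS.Fbar lm lm lm φ ν m))
          * (TS.N lm lm ν : R) := heq
    _ = ∑ m ∈ TS.sN lm lm, Rf m * (TS.F lm lm lm φ m ν * TS.Fbar lm lm lm φ ν m) := by
        rw [Finset.sum_mul]
        refine Finset.sum_congr rfl fun m _ => ?_
        have e1 := TS.F_mulN₂ lm lm lm φ m ν
        linear_combination (TS.Fbar lm lm lm φ ν m * Rf m) * e1

end Key4

end TensorSystem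
namespace TensorSystem

open Fin.NatCast

section Paths

variable {R : Type*} [CommRing R] {I : Type*} (TS : TensorSystem R I)
variable {L : ℕ} {I0 : Set I} {lam : ℕ → I}

lemma fin_val_cast (n : ℕ) (hn : n ≤ L) : (((n : ℕ) : Fin (L + 1)) : ℕ) = n :=
  Fin.val_cast_of_lt (by omega)

lemma fin_cast_ne {m n : ℕ} (hm : m ≤ L) (hn : n ≤ L) (h : m ≠ n) :
    ((m : ℕ) : Fin (L + 1)) ≠ ((n : ℕ) : Fin (L + 1)) := by
  intro hc
  exact h (by rw [← fin_val_cast (L := L) m hm, ← fin_val_cast (L := L) n hn, hc])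

/-- The delta product over `univ.erase ι` is `1` when the functions agree off `ι`. -/
lemma prod_delta_one {μ' μ : Fin (L + 1) → I} {ι : Fin (L + 1)}
    (h : ∀ j, j ≠ ι → μ j = μ' j) :
    (∏ j ∈ Finset.univ.erase ι, if μ j = μ' j then (1 : R) else 0) = 1 :=
  Finset.prod_eq_one fun j hj => by
    rw [h j (Finset.mem_erase.1 hj).1]; simp

/-- The delta product over `univ.erase ι` is `0` when the functions disagree at
some `j ∉ {ι}`. -/
lemma prod_delta_zero {μ' μ : Fin (L + 1) → I} {ι j₀ : Fin (L + 1)}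
    (hj : j₀ ≠ ι) (hne : μ j₀ ≠ μ' j₀) :
    (∏ j ∈ Finset.univ.erase ι, if μ j = μ' j then (1 : R) else 0) = 0 :=
  Finset.prod_eq_zero (Finset.mem_erase.2 ⟨hj, Finset.mem_univ _⟩) (by simp [hne])

/-- The delta product over `univ.erase ι` reduces to the single factor at `κ`
when the functions agree off `{ι, κ}`. -/
lemma prod_delta_two {μ' μ : Fin (L + 1) → I} {ι κ : Fin (L + 1)} (hne : κ ≠ ι)
    (h : ∀ j, j ≠ ι → j ≠ κ → μ j = μ' j) :
    (∏ j ∈ Finset.univ.erase ι, if μ j = μ' j then (1 : R) else 0)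
      = if μ κ = μ' κ then (1 : R) else 0 := by
  rw [← Finset.mul_prod_erase _ _ (Finset.mem_erase.2 ⟨hne, Finset.mem_univ _⟩)]
  rw [Finset.prod_eq_one fun j hj => by
    rcases Finset.mem_erase.1 hj with ⟨hjκ, hj'⟩
    rw [h j (Finset.mem_erase.1 hj').1 hjκ]; simp]
  rw [mul_one]

/-- Characterisation of when a single-site update of a fusion path is again a
fusion path. -/
lemma isPath_update_iff {μ : Fin (L + 1) → I} (hμ : TS.IsPath L I0 lam μ)
    {i : ℕ} (hi1 : 1 ≤ i) (hi2 : i + 1 ≤ L) (x : I) :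
    TS.IsPath L I0 lam (Function.update μ ((i : ℕ) : Fin (L + 1)) x)
      ↔ TS.N (μ (((i - 1 : ℕ) : Fin (L + 1)))) (lam i) x = 1
        ∧ TS.N x (lam (i + 1)) (μ (((i + 1 : ℕ) : Fin (L + 1)))) = 1 := by
  have hupd_self : Function.update μ ((i : ℕ) : Fin (L + 1)) x ((i : ℕ) : Fin (L + 1)) = x :=
    Function.update_self _ _ _
  have hupd_ne : ∀ n : ℕ, n ≤ L → n ≠ i →
      Function.update μ ((i : ℕ) : Fin (L + 1)) x ((n : ℕ) : Fin (L + 1))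
        = μ ((n : ℕ) : Fin (L + 1)) := fun n hn hni =>
    Function.update_of_ne (fin_cast_ne hn (by omega) hni) _ _
  have h0 : Function.update μ ((i : ℕ) : Fin (L + 1)) x 0 = μ 0 := by
    have : (0 : Fin (L + 1)) = ((0 : ℕ) : Fin (L + 1)) := by simp
    rw [this, hupd_ne 0 (by omega) (by omega)]
  constructor
  · rintro ⟨-, hstep⟩
    constructor
    · have := hstep i hi1 (by omega)
      rwa [hupd_self, hupd_ne (i - 1) (by omega) (by omega)] at this
    · have := hstep (i + 1) (by omega) hi2
      rwa [show (i + 1 - 1 : ℕ) = i from by omega, hupd_self,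
        hupd_ne (i + 1) (by omega) (by omega)] at this
  · rintro ⟨h1, h2⟩
    refine ⟨by rw [h0]; exact hμ.1, fun j hj1 hj2 => ?_⟩
    by_cases hji : j = i
    · subst hji
      rw [hupd_self, hupd_ne (j - 1) (by omega) (by omega)]
      exact h1
    · by_cases hji' : j = i + 1
      · subst hji'
        rw [show (i + 1 - 1 : ℕ) = i from by omega, hupd_self,
          hupd_ne (i + 1) (by omega) (by omega)]
        exact h2
      · rw [hupd_ne j (by omega) hji, hupd_ne (j - 1) (by omega) (by omega)]
        exact hμ.2 j hj1 hj2

/-- Collapse a finsum over paths supported on single-site modifications of `μ`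
to a finsum over the new site value. -/
lemma finsum_path_collapse (μ : Fin (L + 1) → I) (ι : Fin (L + 1))
    (G : (Fin (L + 1) → I) → R)
    (hG : ∀ σ, TS.IsPath L I0 lam σ → (∃ j, j ≠ ι ∧ σ j ≠ μ j) → G σ = 0)
    (hG0 : ∀ x : I, ¬ TS.IsPath L I0 lam (Function.update μ ι x)
      → G (Function.update μ ι x) = 0) :
    (∑ᶠ σ ∈ {x : Fin (L + 1) → I | TS.IsPath L I0 lam x}, G σ)
      = ∑ᶠ x : I, G (Function.update μ ι x) := by
  classical
  set P : Set (Fin (L + 1) → I) := {x | TS.IsPath L I0 lam x} with hP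
  have hinj : Function.Injective (fun x : I => Function.update μ ι x) := by
    intro x y h
    have := congrFun h ι
    simpa using this
  have hrange : ∀ σ, σ ∉ Set.range (fun x : I => Function.update μ ι x) →
      (∃ j, j ≠ ι ∧ σ j ≠ μ j) := by
    intro σ hσ
    by_contra hc
    push_neg at hc
    refine hσ ⟨σ ι, funext fun j => ?_⟩
    show Function.update μ ι (σ ι) j = σ j
    by_cases hj : j = ι
    · subst hj; simp
    · rw [Function.update_of_ne hj]
      exact (hc j hj).symm
  have hind : Set.indicator P G
      = Set.indicator (Set.range fun x : I => Function.update μ ι x)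
          (Set.indicator P G) := by
    funext σ
    by_cases hσ : σ ∈ Set.range (fun x : I => Function.update μ ι x)
    · rw [Set.indicator_of_mem hσ]
    · rw [Set.indicator_of_notMem hσ]
      by_cases hσP : σ ∈ P
      · rw [Set.indicator_of_mem hσP]
        exact hG σ hσP (hrange σ hσ)
      · rw [Set.indicator_of_notMem hσP]
  calc (∑ᶠ σ ∈ P, G σ) = ∑ᶠ σ, Set.indicator P G σ := finsum_mem_def P G
    _ = ∑ᶠ σ ∈ Set.range (fun x : I => Function.update μ ι x), Set.indicator P G σ := by
        rw [finsum_mem_def]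
        exact finsum_congr fun σ => congrFun hind σ
    _ = ∑ᶠ x : I, Set.indicator P G (Function.update μ ι x) := finsum_mem_range hinj
    _ = ∑ᶠ x : I, G (Function.update μ ι x) := by
        refine finsum_congr fun x => ?_
        by_cases hx : Function.update μ ι x ∈ P
        · rw [Set.indicator_of_mem hx]
        · rw [Set.indicator_of_notMem hx]
          exact (hG0 x hx).symm

end Paths

end TensorSystem
namespace TensorSystem

open Fin.NatCast

section MainPlus

variable {R : Type*} [CommRing R] {I : Type*} (TS : TensorSystem R I) (lm ν φ : I)

lemma main_plus (hone : TS.ActsOneDimLeft ν lm) (hφ : TS.N ν lm φ = 1)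
    (Rf : I → R) (hRf0 : ∀ m, TS.N lm lm m = 0 → Rf m = 0)
    (hsc : (∑ m ∈ TS.sN lm lm, Rf m * (TS.F lm lm lm φ ν m * TS.Fbar lm lm lm φ m ν))
      = ∑ᶠ υ : I, TS.F lm lm lm φ υ ν * Rf υ * TS.Fbar lm lm lm φ ν υ)
    (L : ℕ) (I0 : Set I) (i : ℕ) (hi1 : 1 ≤ i) (hi2 : i + 2 ≤ L) :
    TS.MatEqOn L I0 (fun _ => lm)
      (TS.mulMat L I0 (fun _ => lm) (TS.pMat L (fun _ => lm) i ν)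
        (TS.mulMat L I0 (fun _ => lm)
          (fun σ τ => ∑ᶠ m : I, Rf m * TS.pMat L (fun _ => lm) (i + 1) m σ τ)
          (TS.pMat L (fun _ => lm) i ν)))
      (smulMat (∑ᶠ υ : I, TS.F lm lm lm φ υ ν * Rf υ * TS.Fbar lm lm lm φ ν υ)
        (TS.pMat L (fun _ => lm) i ν)) := by
  classical
  intro μ' μ hμ' hμ
  have hidx1 : (i + 1 - 1 : ℕ) = i := by omega
  have hidx2 : (i + 1 + 1 : ℕ) = i + 2 := by omega
  have hne_im_ii : ((i - 1 : ℕ) : Fin (L + 1)) ≠ ((i : ℕ) : Fin (L + 1)) :=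
    fin_cast_ne (by omega) (by omega) (by omega)
  have hne_i1_ii : ((i + 1 : ℕ) : Fin (L + 1)) ≠ ((i : ℕ) : Fin (L + 1)) :=
    fin_cast_ne (by omega) (by omega) (by omega)
  have hne_i2_ii : ((i + 2 : ℕ) : Fin (L + 1)) ≠ ((i : ℕ) : Fin (L + 1)) :=
    fin_cast_ne (by omega) (by omega) (by omega)
  have hne_ii_i1 : ((i : ℕ) : Fin (L + 1)) ≠ ((i + 1 : ℕ) : Fin (L + 1)) :=
    fin_cast_ne (by omega) (by omega) (by omega)
  have hne_im_i1 : ((i - 1 : ℕ) : Fin (L + 1)) ≠ ((i + 1 : ℕ) : Fin (L + 1)) :=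
    fin_cast_ne (by omega) (by omega) (by omega)
  have hne_i2_i1 : ((i + 2 : ℕ) : Fin (L + 1)) ≠ ((i + 1 : ℕ) : Fin (L + 1)) :=
    fin_cast_ne (by omega) (by omega) (by omega)
  -- inner collapse
  have hC : ∀ σ : Fin (L + 1) → I,
      TS.mulMat L I0 (fun _ => lm)
        (fun σ' τ => ∑ᶠ m : I, Rf m * TS.pMat L (fun _ => lm) (i + 1) m σ' τ)
        (TS.pMat L (fun _ => lm) i ν) σ μ
      = ∑ᶠ x : I,
          (∑ᶠ m : I, Rf m * TS.pMat L (fun _ => lm) (i + 1) m σ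
            (Function.update μ ((i : ℕ) : Fin (L + 1)) x))
          * TS.pMat L (fun _ => lm) i ν (Function.update μ ((i : ℕ) : Fin (L + 1)) x) μ := by
    intro σ
    refine TS.finsum_path_collapse μ _ _ ?_ ?_
    · rintro τ _ ⟨j, hj, hjne⟩
      have : TS.pMat L (fun _ => lm) i ν τ μ = 0 := by
        simp only [pMat]
        rw [prod_delta_zero hj (Ne.symm hjne), zero_mul, zero_mul]
      rw [this, mul_zero]
    · intro x hx
      rw [TS.isPath_update_iff hμ hi1 (by omega)] at hx
      have : TS.pMat L (fun _ => lm) i ν (Function.update μ ((i : ℕ) : Fin (L + 1)) x) μ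
          = 0 := by
        simp only [pMat, Function.update_self]
        rcases Decidable.not_and_iff_or_not.1 hx with h | h
        · have h0 : TS.N (μ ((i - 1 : ℕ) : Fin (L + 1))) lm x = 0 := by
            have := TS.N_le_one (μ ((i - 1 : ℕ) : Fin (L + 1))) lm x
            omega
          rw [TS.Fbar_zero₁ lm (μ ((i + 1 : ℕ) : Fin (L + 1))) ν h0]
          ring
        · have h0 : TS.N x lm (μ ((i + 1 : ℕ) : Fin (L + 1))) = 0 := by
            have := TS.N_le_one x lm (μ ((i + 1 : ℕ) : Fin (L + 1)))
            omega
          rw [TS.Fbar_zero₄ (μ ((i - 1 : ℕ) : Fin (L + 1))) lm ν h0]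
          ring
      rw [this, mul_zero]
  -- outer collapse
  have hOuter :
      TS.mulMat L I0 (fun _ => lm) (TS.pMat L (fun _ => lm) i ν)
        (TS.mulMat L I0 (fun _ => lm)
          (fun σ τ => ∑ᶠ m : I, Rf m * TS.pMat L (fun _ => lm) (i + 1) m σ τ)
          (TS.pMat L (fun _ => lm) i ν)) μ' μ
      = ∑ᶠ x' : I,
          TS.pMat L (fun _ => lm) i ν μ' (Function.update μ' ((i : ℕ) : Fin (L + 1)) x')
          * (∑ᶠ x : I,
              (∑ᶠ m : I, Rf m * TS.pMat L (fun _ => lm) (i + 1) m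
                (Function.update μ' ((i : ℕ) : Fin (L + 1)) x')
                (Function.update μ ((i : ℕ) : Fin (L + 1)) x))
              * TS.pMat L (fun _ => lm) i ν
                  (Function.update μ ((i : ℕ) : Fin (L + 1)) x) μ) := by
    refine (TS.finsum_path_collapse (L := L) (I0 := I0) (lam := fun _ => lm) μ'
      ((i : ℕ) : Fin (L + 1))
      (fun σ => TS.pMat L (fun _ => lm) i ν μ' σ
        * TS.mulMat L I0 (fun _ => lm)
          (fun σ' τ => ∑ᶠ m : I, Rf m * TS.pMat L (fun _ => lm) (i + 1) m σ' τ)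
          (TS.pMat L (fun _ => lm) i ν) σ μ) ?_ ?_).trans ?_
    · rintro σ _ ⟨j, hj, hjne⟩
      refine mul_eq_zero_of_left ?_ _
      simp only [pMat]
      rw [prod_delta_zero hj hjne, zero_mul, zero_mul]
    · intro x' hx'
      refine mul_eq_zero_of_left ?_ _
      rw [TS.isPath_update_iff hμ' hi1 (by omega)] at hx'
      simp only [pMat, Function.update_self,
        Function.update_of_ne hne_im_ii, Function.update_of_ne hne_i1_ii]
      rcases Decidable.not_and_iff_or_not.1 hx' with h | h
      · have h0 : TS.N (μ' ((i - 1 : ℕ) : Fin (L + 1))) lm x' = 0 := by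
          have := TS.N_le_one (μ' ((i - 1 : ℕ) : Fin (L + 1))) lm x'
          omega
        rw [TS.F_zero₁ lm (μ' ((i + 1 : ℕ) : Fin (L + 1))) ν h0]
        ring
      · have h0 : TS.N x' lm (μ' ((i + 1 : ℕ) : Fin (L + 1))) = 0 := by
          have := TS.N_le_one x' lm (μ' ((i + 1 : ℕ) : Fin (L + 1)))
          omega
        rw [TS.F_zero₄ (μ' ((i - 1 : ℕ) : Fin (L + 1))) lm ν h0]
        ring
    · exact finsum_congr fun x' => congrArg
        (HMul.hMul (TS.pMat L (fun _ => lm) i ν μ'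
          (Function.update μ' ((i : ℕ) : Fin (L + 1)) x'))) (hC _)
  rw [hOuter]
  by_cases hcase : ∀ j : Fin (L + 1), j ≠ ((i : ℕ) : Fin (L + 1))
      → j ≠ ((i + 1 : ℕ) : Fin (L + 1)) → μ j = μ' j
  · -- case B
    have ha' : μ' ((i - 1 : ℕ) : Fin (L + 1)) = μ ((i - 1 : ℕ) : Fin (L + 1)) :=
      (hcase _ hne_im_ii hne_im_i1).symm
    have hd' : μ' ((i + 2 : ℕ) : Fin (L + 1)) = μ ((i + 2 : ℕ) : Fin (L + 1)) :=
      (hcase _ hne_i2_ii hne_i2_i1).symm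
    set a := μ ((i - 1 : ℕ) : Fin (L + 1)) with hadef
    set b := μ ((i : ℕ) : Fin (L + 1)) with hbdef
    set c := μ ((i + 1 : ℕ) : Fin (L + 1)) with hcdef
    set d := μ ((i + 2 : ℕ) : Fin (L + 1)) with hddef
    set b' := μ' ((i : ℕ) : Fin (L + 1)) with hb'def
    set c' := μ' ((i + 1 : ℕ) : Fin (L + 1)) with hc'def
    have hpbra : ∀ x' : I,
        TS.pMat L (fun _ => lm) i ν μ' (Function.update μ' ((i : ℕ) : Fin (L + 1)) x')
        = TS.Fbar a lm lm c' ν b' * TS.F a lm lm c' x' ν := by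
      intro x'
      simp only [pMat, Function.update_self,
        Function.update_of_ne hne_im_ii, Function.update_of_ne hne_i1_ii]
      rw [prod_delta_one fun j hj => Function.update_of_ne hj _ _, one_mul, ha']
    have hpket : ∀ x : I,
        TS.pMat L (fun _ => lm) i ν (Function.update μ ((i : ℕ) : Fin (L + 1)) x) μ
        = TS.Fbar a lm lm c ν x * TS.F a lm lm c b ν := by
      intro x
      simp only [pMat, Function.update_self]
      rw [prod_delta_one fun j hj => (Function.update_of_ne hj _ _).symm, one_mul]
    have hpmid : ∀ m x x' : I,
        TS.pMat L (fun _ => lm) (i + 1) m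
          (Function.update μ' ((i : ℕ) : Fin (L + 1)) x')
          (Function.update μ ((i : ℕ) : Fin (L + 1)) x)
        = (if x = x' then (1 : R) else 0)
            * (TS.Fbar x lm lm d m c' * TS.F x lm lm d c m) := by
      intro m x x'
      have hcast1 : ((i + 1 - 1 : ℕ) : Fin (L + 1)) = ((i : ℕ) : Fin (L + 1)) := by
        rw [hidx1]
      have hcast2 : ((i + 1 + 1 : ℕ) : Fin (L + 1)) = ((i + 2 : ℕ) : Fin (L + 1)) := by
        rw [hidx2]
      simp only [pMat]
      rw [hcast1, hcast2]
      rw [prod_delta_two hne_ii_i1 fun j hj1 hj2 => by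
        rw [Function.update_of_ne hj2, Function.update_of_ne hj2]
        exact hcase j hj2 hj1]
      simp only [Function.update_self, Function.update_of_ne hne_i1_ii,
        Function.update_of_ne hne_i2_ii]
      rw [← hcdef, ← hddef, ← hc'def]
      ring
    -- collapse the inner x-finsum
    have hinner : ∀ x' : I,
        (∑ᶠ x : I,
          (∑ᶠ m : I, Rf m * TS.pMat L (fun _ => lm) (i + 1) m
            (Function.update μ' ((i : ℕ) : Fin (L + 1)) x')
            (Function.update μ ((i : ℕ) : Fin (L + 1)) x))
          * TS.pMat L (fun _ => lm) i ν
              (Function.update μ ((i : ℕ) : Fin (L + 1)) x) μ)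
        = (∑ᶠ m : I, Rf m * (TS.Fbar x' lm lm d m c' * TS.F x' lm lm d c m))
            * (TS.Fbar a lm lm c ν x' * TS.F a lm lm c b ν) := by
      intro x'
      have hx : ∀ x : I,
          (∑ᶠ m : I, Rf m * TS.pMat L (fun _ => lm) (i + 1) m
            (Function.update μ' ((i : ℕ) : Fin (L + 1)) x')
            (Function.update μ ((i : ℕ) : Fin (L + 1)) x))
          * TS.pMat L (fun _ => lm) i ν
              (Function.update μ ((i : ℕ) : Fin (L + 1)) x) μ
          = (if x = x' then (1 : R) else 0)
              * ((∑ᶠ m : I, Rf m * (TS.Fbar x lm lm d m c' * TS.F x lm lm d c m))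
                * (TS.Fbar a lm lm c ν x * TS.F a lm lm c b ν)) := by
        intro x
        rw [hpket x]
        by_cases hxx : x = x'
        · subst hxx
          have hm : ∀ m : I, TS.pMat L (fun _ => lm) (i + 1) m
              (Function.update μ' ((i : ℕ) : Fin (L + 1)) x)
              (Function.update μ ((i : ℕ) : Fin (L + 1)) x)
              = TS.Fbar x lm lm d m c' * TS.F x lm lm d c m := by
            intro m; rw [hpmid m x x]; simp
          simp only [hm, eq_self_iff_true, if_true, one_mul]
        · have hm : ∀ m : I, TS.pMat L (fun _ => lm) (i + 1) m
              (Function.update μ' ((i : ℕ) : Fin (L + 1)) x')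
              (Function.update μ ((i : ℕ) : Fin (L + 1)) x) = 0 := by
            intro m; rw [hpmid m x x']; simp [hxx]
          simp only [hm, mul_zero, finsum_zero, zero_mul, hxx, if_false]
      rw [finsum_congr hx, finsum_eq_single _ x' fun x hxne => by simp [hxne]]
      simp
    rw [finsum_congr fun x' => by rw [hinner x', hpbra x']]
    -- convert to finite sums
    have hfin2 : ∀ x' : I,
        (∑ᶠ m : I, Rf m * (TS.Fbar x' lm lm d m c' * TS.F x' lm lm d c m))
        = ∑ m ∈ TS.sN lm lm, Rf m * (TS.Fbar x' lm lm d m c' * TS.F x' lm lm d c m) :=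
      fun x' => finsum_eq_sum_of_support_subset
        (fun m : I => Rf m * (TS.Fbar x' lm lm d m c' * TS.F x' lm lm d c m))
        (fun m hm => by
          simp only [Finset.coe_sort_coe, Finset.mem_coe, mem_sN]
          intro hN
          simp [Function.mem_support, hRf0 m hN] at hm)
    have hsupp : (Function.support fun x' : I =>
        (TS.Fbar a lm lm c' ν b' * TS.F a lm lm c' x' ν)
          * ((∑ᶠ m : I, Rf m * (TS.Fbar x' lm lm d m c' * TS.F x' lm lm d c m))
            * (TS.Fbar a lm lm c ν x' * TS.F a lm lm c b ν))) ⊆ ↑(TS.sN a lm) := by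
      intro x' hx'
      simp only [Finset.coe_sort_coe, Finset.mem_coe, mem_sN]
      intro hN
      simp [Function.mem_support, TS.Fbar_zero₁ lm c ν hN] at hx'
    have hfin : (∑ᶠ x' : I,
        (TS.Fbar a lm lm c' ν b' * TS.F a lm lm c' x' ν)
          * ((∑ᶠ m : I, Rf m * (TS.Fbar x' lm lm d m c' * TS.F x' lm lm d c m))
            * (TS.Fbar a lm lm c ν x' * TS.F a lm lm c b ν)))
        = ∑ x' ∈ TS.sN a lm,
          (TS.Fbar a lm lm c' ν b' * TS.F a lm lm c' x' ν)
            * ((∑ m ∈ TS.sN lm lm, Rf m * (TS.Fbar x' lm lm d m c' * TS.F x' lm lm d c m))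
              * (TS.Fbar a lm lm c ν x' * TS.F a lm lm c b ν)) := by
      rw [finsum_eq_sum_of_support_subset _ hsupp]
      refine Finset.sum_congr rfl fun x' _ => ?_
      show (TS.Fbar a lm lm c' ν b' * TS.F a lm lm c' x' ν)
          * ((∑ᶠ m : I, Rf m * (TS.Fbar x' lm lm d m c' * TS.F x' lm lm d c m))
            * (TS.Fbar a lm lm c ν x' * TS.F a lm lm c b ν)) = _
      rw [hfin2 x']
    rw [hfin]
    have hrearr : (∑ x' ∈ TS.sN a lm,
        (TS.Fbar a lm lm c' ν b' * TS.F a lm lm c' x' ν)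
          * ((∑ m ∈ TS.sN lm lm, Rf m * (TS.Fbar x' lm lm d m c' * TS.F x' lm lm d c m))
            * (TS.Fbar a lm lm c ν x' * TS.F a lm lm c b ν)))
        = (TS.Fbar a lm lm c' ν b' * TS.F a lm lm c b ν)
            * ∑ m ∈ TS.sN lm lm, Rf m
              * ∑ x ∈ TS.sN a lm,
                TS.F a lm lm c' x ν * TS.Fbar x lm lm d m c' * TS.F x lm lm d c m
                  * TS.Fbar a lm lm c ν x := by
      calc (∑ x' ∈ TS.sN a lm,
          (TS.Fbar a lm lm c' ν b' * TS.F a lm lm c' x' ν)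
            * ((∑ m ∈ TS.sN lm lm, Rf m * (TS.Fbar x' lm lm d m c' * TS.F x' lm lm d c m))
              * (TS.Fbar a lm lm c ν x' * TS.F a lm lm c b ν)))
          = ∑ x' ∈ TS.sN a lm, ∑ m ∈ TS.sN lm lm,
              (TS.Fbar a lm lm c' ν b' * TS.F a lm lm c b ν)
              * (Rf m * (TS.F a lm lm c' x' ν * TS.Fbar x' lm lm d m c'
                  * TS.F x' lm lm d c m * TS.Fbar a lm lm c ν x')) := by
            refine Finset.sum_congr rfl fun x' _ => ?_
            rw [Finset.sum_mul, Finset.mul_sum]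
            try exact Finset.sum_congr rfl fun m _ => by ring
        _ = ∑ m ∈ TS.sN lm lm, ∑ x' ∈ TS.sN a lm,
              (TS.Fbar a lm lm c' ν b' * TS.F a lm lm c b ν)
              * (Rf m * (TS.F a lm lm c' x' ν * TS.Fbar x' lm lm d m c'
                  * TS.F x' lm lm d c m * TS.Fbar a lm lm c ν x')) := Finset.sum_comm
        _ = (TS.Fbar a lm lm c' ν b' * TS.F a lm lm c b ν)
              * ∑ m ∈ TS.sN lm lm, Rf m
                * ∑ x ∈ TS.sN a lm,
                  TS.F a lm lm c' x ν * TS.Fbar x lm lm d m c' * TS.F x lm lm d c m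
                    * TS.Fbar a lm lm c ν x := by
            rw [Finset.mul_sum]
            refine Finset.sum_congr rfl fun m _ => ?_
            rw [Finset.mul_sum, Finset.mul_sum]
            try exact Finset.sum_congr rfl fun x' _ => by ring
    rw [hrearr]
    -- apply the key identity
    have hkey : (∑ m ∈ TS.sN lm lm, Rf m
          * ∑ x ∈ TS.sN a lm,
            TS.F a lm lm c' x ν * TS.Fbar x lm lm d m c' * TS.F x lm lm d c m
              * TS.Fbar a lm lm c ν x)
        = (∑ m ∈ TS.sN lm lm, Rf m * (TS.F lm lm lm φ ν m * TS.Fbar lm lm lm φ m ν))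
            * ((if c = c' then (1 : R) else 0) * (TS.N a ν c : R) * (TS.N c lm d : R)) := by
      rw [Finset.sum_mul]
      exact Finset.sum_congr rfl fun m _ => by
        rw [TS.key1m lm ν φ hone hφ a c c' d m]; ring
    rw [hkey, hsc]
    -- right-hand side
    have hrhs : smulMat (∑ᶠ υ : I, TS.F lm lm lm φ υ ν * Rf υ * TS.Fbar lm lm lm φ ν υ)
        (TS.pMat L (fun _ => lm) i ν) μ' μ
        = (∑ᶠ υ : I, TS.F lm lm lm φ υ ν * Rf υ * TS.Fbar lm lm lm φ ν υ)
          * ((if c = c' then (1 : R) else 0)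
            * (TS.Fbar a lm lm c ν b' * TS.F a lm lm c b ν)) := by
      simp only [smulMat, pMat]
      rw [prod_delta_two hne_i1_ii fun j hj1 hj2 => hcase j hj1 hj2]
      ring
    rw [hrhs]
    have hNcd : TS.N c lm d = 1 := by
      have := hμ.2 (i + 2) (by omega) hi2
      rwa [show (i + 2 - 1 : ℕ) = i + 1 from by omega] at this
    by_cases hcc : c = c'
    · rw [← hcc]
      simp only [eq_self_iff_true, if_true, one_mul, hNcd, Nat.cast_one, mul_one]
      have e1 := TS.F_mulN₃ a lm lm c b ν
      linear_combination (TS.Fbar a lm lm c ν b'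
        * (∑ᶠ υ : I, TS.F lm lm lm φ υ ν * Rf υ * TS.Fbar lm lm lm φ ν υ)) * e1
    · simp [hcc]
  · -- case A : some spectator coordinate differs
    push_neg at hcase
    obtain ⟨j₀, hj₀i, hj₀i1, hj₀ne⟩ := hcase
    have hzero : ∀ x x' m : I, TS.pMat L (fun _ => lm) (i + 1) m
        (Function.update μ' ((i : ℕ) : Fin (L + 1)) x')
        (Function.update μ ((i : ℕ) : Fin (L + 1)) x) = 0 := by
      intro x x' m
      simp only [pMat]
      rw [prod_delta_zero hj₀i1 (by
        rw [Function.update_of_ne hj₀i, Function.update_of_ne hj₀i]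
        exact hj₀ne), zero_mul, zero_mul]
    rw [finsum_congr fun x' => by
      rw [finsum_congr fun x => by
        rw [finsum_congr fun m => by rw [hzero x x' m, mul_zero], finsum_zero, zero_mul],
        finsum_zero, mul_zero]]
    rw [finsum_zero]
    have : TS.pMat L (fun _ => lm) i ν μ' μ = 0 := by
      simp only [pMat]
      rw [prod_delta_zero hj₀i hj₀ne, zero_mul, zero_mul]
    rw [smulMat, this, mul_zero]

end MainPlus

end TensorSystem
namespace TensorSystem

open Fin.NatCast

section MainMinus

variable {R : Type*} [CommRing R] {I : Type*} (TS : TensorSystem R I) (lm ν φ : I)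

lemma main_minus (hone : TS.ActsOneDimLeft ν lm) (hφ : TS.N ν lm φ = 1)
    (hsymm : ∀ x y z : I, TS.N x y z = TS.N y x z)
    (Rf : I → R) (hRf0 : ∀ m, TS.N lm lm m = 0 → Rf m = 0)
    (hsc : (∑ m ∈ TS.sN lm lm, Rf m * (TS.F lm lm lm φ m ν * TS.Fbar lm lm lm φ ν m))
      = ∑ᶠ υ : I, TS.F lm lm lm φ υ ν * Rf υ * TS.Fbar lm lm lm φ ν υ)
    (L : ℕ) (I0 : Set I) (i : ℕ) (hi1 : 2 ≤ i) (hi2 : i + 1 ≤ L) :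
    TS.MatEqOn L I0 (fun _ => lm)
      (TS.mulMat L I0 (fun _ => lm) (TS.pMat L (fun _ => lm) i ν)
        (TS.mulMat L I0 (fun _ => lm)
          (fun σ τ => ∑ᶠ m : I, Rf m * TS.pMat L (fun _ => lm) (i - 1) m σ τ)
          (TS.pMat L (fun _ => lm) i ν)))
      (smulMat (∑ᶠ υ : I, TS.F lm lm lm φ υ ν * Rf υ * TS.Fbar lm lm lm φ ν υ)
        (TS.pMat L (fun _ => lm) i ν)) := by
  classical
  intro μ' μ hμ' hμ
  have hidx1 : (i - 1 - 1 : ℕ) = i - 2 := by omega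
  have hidx2 : (i - 1 + 1 : ℕ) = i := by omega
  have hne_im2_ii : ((i - 2 : ℕ) : Fin (L + 1)) ≠ ((i : ℕ) : Fin (L + 1)) :=
    fin_cast_ne (by omega) (by omega) (by omega)
  have hne_im2_im : ((i - 2 : ℕ) : Fin (L + 1)) ≠ ((i - 1 : ℕ) : Fin (L + 1)) :=
    fin_cast_ne (by omega) (by omega) (by omega)
  have hne_im_ii : ((i - 1 : ℕ) : Fin (L + 1)) ≠ ((i : ℕ) : Fin (L + 1)) :=
    fin_cast_ne (by omega) (by omega) (by omega)
  have hne_i1_ii : ((i + 1 : ℕ) : Fin (L + 1)) ≠ ((i : ℕ) : Fin (L + 1)) :=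
    fin_cast_ne (by omega) (by omega) (by omega)
  have hne_i1_im : ((i + 1 : ℕ) : Fin (L + 1)) ≠ ((i - 1 : ℕ) : Fin (L + 1)) :=
    fin_cast_ne (by omega) (by omega) (by omega)
  have hne_ii_im : ((i : ℕ) : Fin (L + 1)) ≠ ((i - 1 : ℕ) : Fin (L + 1)) :=
    fin_cast_ne (by omega) (by omega) (by omega)
  -- inner collapse
  have hC : ∀ σ : Fin (L + 1) → I,
      TS.mulMat L I0 (fun _ => lm)
        (fun σ' τ => ∑ᶠ m : I, Rf m * TS.pMat L (fun _ => lm) (i - 1) m σ' τ)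
        (TS.pMat L (fun _ => lm) i ν) σ μ
      = ∑ᶠ x : I,
          (∑ᶠ m : I, Rf m * TS.pMat L (fun _ => lm) (i - 1) m σ
            (Function.update μ ((i : ℕ) : Fin (L + 1)) x))
          * TS.pMat L (fun _ => lm) i ν (Function.update μ ((i : ℕ) : Fin (L + 1)) x) μ := by
    intro σ
    refine TS.finsum_path_collapse μ _ _ ?_ ?_
    · rintro τ _ ⟨j, hj, hjne⟩
      have : TS.pMat L (fun _ => lm) i ν τ μ = 0 := by
        simp only [pMat]
        rw [prod_delta_zero hj (Ne.symm hjne), zero_mul, zero_mul]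
      rw [this, mul_zero]
    · intro x hx
      rw [TS.isPath_update_iff hμ (by omega) (by omega)] at hx
      have : TS.pMat L (fun _ => lm) i ν (Function.update μ ((i : ℕ) : Fin (L + 1)) x) μ
          = 0 := by
        simp only [pMat, Function.update_self]
        rcases Decidable.not_and_iff_or_not.1 hx with h | h
        · have h0 : TS.N (μ ((i - 1 : ℕ) : Fin (L + 1))) lm x = 0 := by
            have := TS.N_le_one (μ ((i - 1 : ℕ) : Fin (L + 1))) lm x
            omega
          rw [TS.Fbar_zero₁ lm (μ ((i + 1 : ℕ) : Fin (L + 1))) ν h0]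
          ring
        · have h0 : TS.N x lm (μ ((i + 1 : ℕ) : Fin (L + 1))) = 0 := by
            have := TS.N_le_one x lm (μ ((i + 1 : ℕ) : Fin (L + 1)))
            omega
          rw [TS.Fbar_zero₄ (μ ((i - 1 : ℕ) : Fin (L + 1))) lm ν h0]
          ring
      rw [this, mul_zero]
  -- outer collapse
  have hOuter :
      TS.mulMat L I0 (fun _ => lm) (TS.pMat L (fun _ => lm) i ν)
        (TS.mulMat L I0 (fun _ => lm)
          (fun σ τ => ∑ᶠ m : I, Rf m * TS.pMat L (fun _ => lm) (i - 1) m σ τ)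
          (TS.pMat L (fun _ => lm) i ν)) μ' μ
      = ∑ᶠ x' : I,
          TS.pMat L (fun _ => lm) i ν μ' (Function.update μ' ((i : ℕ) : Fin (L + 1)) x')
          * (∑ᶠ x : I,
              (∑ᶠ m : I, Rf m * TS.pMat L (fun _ => lm) (i - 1) m
                (Function.update μ' ((i : ℕ) : Fin (L + 1)) x')
                (Function.update μ ((i : ℕ) : Fin (L + 1)) x))
              * TS.pMat L (fun _ => lm) i ν
                  (Function.update μ ((i : ℕ) : Fin (L + 1)) x) μ) := by
    refine (TS.finsum_path_collapse (L := L) (I0 := I0) (lam := fun _ => lm) μ'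
      ((i : ℕ) : Fin (L + 1))
      (fun σ => TS.pMat L (fun _ => lm) i ν μ' σ
        * TS.mulMat L I0 (fun _ => lm)
          (fun σ' τ => ∑ᶠ m : I, Rf m * TS.pMat L (fun _ => lm) (i - 1) m σ' τ)
          (TS.pMat L (fun _ => lm) i ν) σ μ) ?_ ?_).trans ?_
    · rintro σ _ ⟨j, hj, hjne⟩
      refine mul_eq_zero_of_left ?_ _
      simp only [pMat]
      rw [prod_delta_zero hj hjne, zero_mul, zero_mul]
    · intro x' hx'
      refine mul_eq_zero_of_left ?_ _
      rw [TS.isPath_update_iff hμ' (by omega) (by omega)] at hx'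
      simp only [pMat, Function.update_self,
        Function.update_of_ne hne_im_ii, Function.update_of_ne hne_i1_ii]
      rcases Decidable.not_and_iff_or_not.1 hx' with h | h
      · have h0 : TS.N (μ' ((i - 1 : ℕ) : Fin (L + 1))) lm x' = 0 := by
          have := TS.N_le_one (μ' ((i - 1 : ℕ) : Fin (L + 1))) lm x'
          omega
        rw [TS.F_zero₁ lm (μ' ((i + 1 : ℕ) : Fin (L + 1))) ν h0]
        ring
      · have h0 : TS.N x' lm (μ' ((i + 1 : ℕ) : Fin (L + 1))) = 0 := by
          have := TS.N_le_one x' lm (μ' ((i + 1 : ℕ) : Fin (L + 1)))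
          omega
        rw [TS.F_zero₄ (μ' ((i - 1 : ℕ) : Fin (L + 1))) lm ν h0]
        ring
    · exact finsum_congr fun x' => congrArg
        (HMul.hMul (TS.pMat L (fun _ => lm) i ν μ'
          (Function.update μ' ((i : ℕ) : Fin (L + 1)) x'))) (hC _)
  rw [hOuter]
  by_cases hcase : ∀ j : Fin (L + 1), j ≠ ((i : ℕ) : Fin (L + 1))
      → j ≠ ((i - 1 : ℕ) : Fin (L + 1)) → μ j = μ' j
  · -- case B
    have ha' : μ' ((i - 2 : ℕ) : Fin (L + 1)) = μ ((i - 2 : ℕ) : Fin (L + 1)) :=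
      (hcase _ hne_im2_ii hne_im2_im).symm
    have hd' : μ' ((i + 1 : ℕ) : Fin (L + 1)) = μ ((i + 1 : ℕ) : Fin (L + 1)) :=
      (hcase _ hne_i1_ii hne_i1_im).symm
    set a := μ ((i - 2 : ℕ) : Fin (L + 1)) with hadef
    set b := μ ((i - 1 : ℕ) : Fin (L + 1)) with hbdef
    set c := μ ((i : ℕ) : Fin (L + 1)) with hcdef
    set d := μ ((i + 1 : ℕ) : Fin (L + 1)) with hddef
    set b' := μ' ((i - 1 : ℕ) : Fin (L + 1)) with hb'def
    set c' := μ' ((i : ℕ) : Fin (L + 1)) with hc'def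
    have hpbra : ∀ x' : I,
        TS.pMat L (fun _ => lm) i ν μ' (Function.update μ' ((i : ℕ) : Fin (L + 1)) x')
        = TS.Fbar b' lm lm d ν c' * TS.F b' lm lm d x' ν := by
      intro x'
      simp only [pMat, Function.update_self,
        Function.update_of_ne hne_im_ii, Function.update_of_ne hne_i1_ii]
      rw [prod_delta_one fun j hj => Function.update_of_ne hj _ _, one_mul, hd']
    have hpket : ∀ x : I,
        TS.pMat L (fun _ => lm) i ν (Function.update μ ((i : ℕ) : Fin (L + 1)) x) μ
        = TS.Fbar b lm lm d ν x * TS.F b lm lm d c ν := by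
      intro x
      simp only [pMat, Function.update_self]
      rw [prod_delta_one fun j hj => (Function.update_of_ne hj _ _).symm, one_mul]
    have hpmid : ∀ m x x' : I,
        TS.pMat L (fun _ => lm) (i - 1) m
          (Function.update μ' ((i : ℕ) : Fin (L + 1)) x')
          (Function.update μ ((i : ℕ) : Fin (L + 1)) x)
        = (if x = x' then (1 : R) else 0)
            * (TS.Fbar a lm lm x m b' * TS.F a lm lm x b m) := by
      intro m x x'
      have hcast1 : ((i - 1 - 1 : ℕ) : Fin (L + 1)) = ((i - 2 : ℕ) : Fin (L + 1)) := by
        rw [hidx1]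
      have hcast2 : ((i - 1 + 1 : ℕ) : Fin (L + 1)) = ((i : ℕ) : Fin (L + 1)) := by
        rw [hidx2]
      simp only [pMat]
      rw [hcast1, hcast2]
      rw [prod_delta_two hne_ii_im fun j hj1 hj2 => by
        rw [Function.update_of_ne hj2, Function.update_of_ne hj2]
        exact hcase j hj2 hj1]
      simp only [Function.update_self, Function.update_of_ne hne_im2_ii,
        Function.update_of_ne hne_im_ii]
      rw [← hadef, ← hbdef, ← hb'def]
      ring
    -- collapse the inner x-finsum
    have hinner : ∀ x' : I,
        (∑ᶠ x : I,
          (∑ᶠ m : I, Rf m * TS.pMat L (fun _ => lm) (i - 1) m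
            (Function.update μ' ((i : ℕ) : Fin (L + 1)) x')
            (Function.update μ ((i : ℕ) : Fin (L + 1)) x))
          * TS.pMat L (fun _ => lm) i ν
              (Function.update μ ((i : ℕ) : Fin (L + 1)) x) μ)
        = (∑ᶠ m : I, Rf m * (TS.Fbar a lm lm x' m b' * TS.F a lm lm x' b m))
            * (TS.Fbar b lm lm d ν x' * TS.F b lm lm d c ν) := by
      intro x'
      have hx : ∀ x : I,
          (∑ᶠ m : I, Rf m * TS.pMat L (fun _ => lm) (i - 1) m
            (Function.update μ' ((i : ℕ) : Fin (L + 1)) x')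
            (Function.update μ ((i : ℕ) : Fin (L + 1)) x))
          * TS.pMat L (fun _ => lm) i ν
              (Function.update μ ((i : ℕ) : Fin (L + 1)) x) μ
          = (if x = x' then (1 : R) else 0)
              * ((∑ᶠ m : I, Rf m * (TS.Fbar a lm lm x m b' * TS.F a lm lm x b m))
                * (TS.Fbar b lm lm d ν x * TS.F b lm lm d c ν)) := by
        intro x
        rw [hpket x]
        by_cases hxx : x = x'
        · subst hxx
          have hm : ∀ m : I, TS.pMat L (fun _ => lm) (i - 1) m
              (Function.update μ' ((i : ℕ) : Fin (L + 1)) x)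
              (Function.update μ ((i : ℕ) : Fin (L + 1)) x)
              = TS.Fbar a lm lm x m b' * TS.F a lm lm x b m := by
            intro m; rw [hpmid m x x]; simp
          simp only [hm, eq_self_iff_true, if_true, one_mul]
        · have hm : ∀ m : I, TS.pMat L (fun _ => lm) (i - 1) m
              (Function.update μ' ((i : ℕ) : Fin (L + 1)) x')
              (Function.update μ ((i : ℕ) : Fin (L + 1)) x) = 0 := by
            intro m; rw [hpmid m x x']; simp [hxx]
          simp only [hm, mul_zero, finsum_zero, zero_mul, hxx, if_false]
      rw [finsum_congr hx, finsum_eq_single _ x' fun x hxne => by simp [hxne]]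
      simp
    rw [finsum_congr fun x' => by rw [hinner x', hpbra x']]
    -- convert to finite sums over the union finset
    set SY : Finset I := TS.sN b lm ∪ TS.sN b' lm with hSY
    have hs1 : ∀ y : I, TS.N b lm y ≠ 0 → y ∈ SY := fun y hy =>
      Finset.mem_union_left _ (TS.mem_sN.2 hy)
    have hs2 : ∀ y : I, TS.N b' lm y ≠ 0 → y ∈ SY := fun y hy =>
      Finset.mem_union_right _ (TS.mem_sN.2 hy)
    have hfin2 : ∀ x' : I,
        (∑ᶠ m : I, Rf m * (TS.Fbar a lm lm x' m b' * TS.F a lm lm x' b m))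
        = ∑ m ∈ TS.sN lm lm, Rf m * (TS.Fbar a lm lm x' m b' * TS.F a lm lm x' b m) :=
      fun x' => finsum_eq_sum_of_support_subset
        (fun m : I => Rf m * (TS.Fbar a lm lm x' m b' * TS.F a lm lm x' b m))
        (fun m hm => by
          simp only [Finset.coe_sort_coe, Finset.mem_coe, mem_sN]
          intro hN
          simp [Function.mem_support, hRf0 m hN] at hm)
    have hsupp : (Function.support fun x' : I =>
        (TS.Fbar b' lm lm d ν c' * TS.F b' lm lm d x' ν)
          * ((∑ᶠ m : I, Rf m * (TS.Fbar a lm lm x' m b' * TS.F a lm lm x' b m))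
            * (TS.Fbar b lm lm d ν x' * TS.F b lm lm d c ν))) ⊆ ↑SY := by
      intro x' hx'
      simp only [Finset.coe_sort_coe, Finset.mem_coe]
      refine hs1 x' fun hN => ?_
      simp [Function.mem_support, TS.Fbar_zero₁ lm d ν hN] at hx'
    have hfin : (∑ᶠ x' : I,
        (TS.Fbar b' lm lm d ν c' * TS.F b' lm lm d x' ν)
          * ((∑ᶠ m : I, Rf m * (TS.Fbar a lm lm x' m b' * TS.F a lm lm x' b m))
            * (TS.Fbar b lm lm d ν x' * TS.F b lm lm d c ν)))
        = ∑ x' ∈ SY,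
          (TS.Fbar b' lm lm d ν c' * TS.F b' lm lm d x' ν)
            * ((∑ m ∈ TS.sN lm lm, Rf m * (TS.Fbar a lm lm x' m b' * TS.F a lm lm x' b m))
              * (TS.Fbar b lm lm d ν x' * TS.F b lm lm d c ν)) := by
      rw [finsum_eq_sum_of_support_subset _ hsupp]
      refine Finset.sum_congr rfl fun x' _ => ?_
      show (TS.Fbar b' lm lm d ν c' * TS.F b' lm lm d x' ν)
          * ((∑ᶠ m : I, Rf m * (TS.Fbar a lm lm x' m b' * TS.F a lm lm x' b m))
            * (TS.Fbar b lm lm d ν x' * TS.F b lm lm d c ν)) = _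
      rw [hfin2 x']
    rw [hfin]
    have hrearr : (∑ x' ∈ SY,
        (TS.Fbar b' lm lm d ν c' * TS.F b' lm lm d x' ν)
          * ((∑ m ∈ TS.sN lm lm, Rf m * (TS.Fbar a lm lm x' m b' * TS.F a lm lm x' b m))
            * (TS.Fbar b lm lm d ν x' * TS.F b lm lm d c ν)))
        = (TS.Fbar b' lm lm d ν c' * TS.F b lm lm d c ν)
            * ∑ m ∈ TS.sN lm lm, Rf m
              * ∑ y ∈ SY,
                TS.F b' lm lm d y ν * TS.Fbar a lm lm y m b' * TS.F a lm lm y b m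
                  * TS.Fbar b lm lm d ν y := by
      calc (∑ x' ∈ SY,
          (TS.Fbar b' lm lm d ν c' * TS.F b' lm lm d x' ν)
            * ((∑ m ∈ TS.sN lm lm, Rf m * (TS.Fbar a lm lm x' m b' * TS.F a lm lm x' b m))
              * (TS.Fbar b lm lm d ν x' * TS.F b lm lm d c ν)))
          = ∑ x' ∈ SY, ∑ m ∈ TS.sN lm lm,
              (TS.Fbar b' lm lm d ν c' * TS.F b lm lm d c ν)
              * (Rf m * (TS.F b' lm lm d x' ν * TS.Fbar a lm lm x' m b'
                  * TS.F a lm lm x' b m * TS.Fbar b lm lm d ν x')) := by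
            refine Finset.sum_congr rfl fun x' _ => ?_
            rw [Finset.sum_mul, Finset.mul_sum]
            try exact Finset.sum_congr rfl fun m _ => by ring
        _ = ∑ m ∈ TS.sN lm lm, ∑ x' ∈ SY,
              (TS.Fbar b' lm lm d ν c' * TS.F b lm lm d c ν)
              * (Rf m * (TS.F b' lm lm d x' ν * TS.Fbar a lm lm x' m b'
                  * TS.F a lm lm x' b m * TS.Fbar b lm lm d ν x')) := Finset.sum_comm
        _ = (TS.Fbar b' lm lm d ν c' * TS.F b lm lm d c ν)
              * ∑ m ∈ TS.sN lm lm, Rf m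
                * ∑ y ∈ SY,
                  TS.F b' lm lm d y ν * TS.Fbar a lm lm y m b' * TS.F a lm lm y b m
                    * TS.Fbar b lm lm d ν y := by
            rw [Finset.mul_sum]
            refine Finset.sum_congr rfl fun m _ => ?_
            rw [Finset.mul_sum, Finset.mul_sum]
            try exact Finset.sum_congr rfl fun x' _ => by ring
    rw [hrearr]
    -- apply the key identity
    have hkey : (∑ m ∈ TS.sN lm lm, Rf m
          * ∑ y ∈ SY,
            TS.F b' lm lm d y ν * TS.Fbar a lm lm y m b' * TS.F a lm lm y b m
              * TS.Fbar b lm lm d ν y)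
        = (∑ m ∈ TS.sN lm lm, Rf m * (TS.F lm lm lm φ m ν * TS.Fbar lm lm lm φ ν m))
            * ((if b = b' then (1 : R) else 0) * (TS.N a lm b : R) * (TS.N b ν d : R)) := by
      rw [Finset.sum_mul]
      exact Finset.sum_congr rfl fun m _ => by
        rw [TS.key2m lm ν φ hone hφ hsymm a b b' d m hs1 hs2]; ring
    rw [hkey, hsc]
    -- right-hand side
    have hrhs : smulMat (∑ᶠ υ : I, TS.F lm lm lm φ υ ν * Rf υ * TS.Fbar lm lm lm φ ν υ)
        (TS.pMat L (fun _ => lm) i ν) μ' μ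
        = (∑ᶠ υ : I, TS.F lm lm lm φ υ ν * Rf υ * TS.Fbar lm lm lm φ ν υ)
          * ((if b = b' then (1 : R) else 0)
            * (TS.Fbar b lm lm d ν c' * TS.F b lm lm d c ν)) := by
      simp only [smulMat, pMat]
      rw [prod_delta_two hne_im_ii fun j hj1 hj2 => hcase j hj1 hj2]
      ring
    rw [hrhs]
    have hNab : TS.N a lm b = 1 := by
      have := hμ.2 (i - 1) (by omega) (by omega)
      rwa [show (i - 1 - 1 : ℕ) = i - 2 from by omega] at this
    by_cases hbb : b = b'
    · rw [← hbb]
      simp only [eq_self_iff_true, if_true, one_mul, hNab, Nat.cast_one, mul_one]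
      have e1 := TS.F_mulN₃ b lm lm d c ν
      linear_combination (TS.Fbar b lm lm d ν c'
        * (∑ᶠ υ : I, TS.F lm lm lm φ υ ν * Rf υ * TS.Fbar lm lm lm φ ν υ)) * e1
    · simp [hbb]
  · -- case A : some spectator coordinate differs
    push_neg at hcase
    obtain ⟨j₀, hj₀i, hj₀im, hj₀ne⟩ := hcase
    have hzero : ∀ x x' m : I, TS.pMat L (fun _ => lm) (i - 1) m
        (Function.update μ' ((i : ℕ) : Fin (L + 1)) x')
        (Function.update μ ((i : ℕ) : Fin (L + 1)) x) = 0 := by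
      intro x x' m
      simp only [pMat]
      rw [prod_delta_zero hj₀im (by
        rw [Function.update_of_ne hj₀i, Function.update_of_ne hj₀i]
        exact hj₀ne), zero_mul, zero_mul]
    rw [finsum_congr fun x' => by
      rw [finsum_congr fun x => by
        rw [finsum_congr fun m => by rw [hzero x x' m, mul_zero], finsum_zero, zero_mul],
        finsum_zero, mul_zero]]
    rw [finsum_zero]
    have : TS.pMat L (fun _ => lm) i ν μ' μ = 0 := by
      simp only [pMat]
      rw [prod_delta_zero hj₀i hj₀ne, zero_mul, zero_mul]
    rw [smulMat, this, mul_zero]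

end MainMinus

end TensorSystem
section FinalAssembly

variable {R : Type*} [CommRing R] {I : Type*}

private lemma scalar_conv (TS : TensorSystem R I) (lm ν φ : I) (Rf : I → R) :
    (∑ m ∈ TS.sN lm lm, Rf m * (TS.F lm lm lm φ m ν * TS.Fbar lm lm lm φ ν m))
      = ∑ᶠ υ : I, TS.F lm lm lm φ υ ν * Rf υ * TS.Fbar lm lm lm φ ν υ := by
  rw [finsum_eq_sum_of_support_subset
    (fun υ : I => TS.F lm lm lm φ υ ν * Rf υ * TS.Fbar lm lm lm φ ν υ)
    (s := TS.sN lm lm) (fun υ hυ => by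
      simp only [Finset.coe_sort_coe, Finset.mem_coe, TensorSystem.mem_sN]
      intro hN
      simp [Function.mem_support, TS.F_zero₁ lm φ ν hN] at hυ)]
  exact Finset.sum_congr rfl fun m _ => by ring

end FinalAssembly
/-- `p_i^{(ν)} R_{i±1} p_i^{(ν)}` and
`p_i^{(ν)} R_{i±1}⁻¹ p_i^{(ν)}` as multiples of `p_i^{(ν)}`. -/
theorem projection_braiding_projection
    {R : Type*} [CommRing R] {I : Type*}
    (BTS : BraidedTensorSystem R I) (lam0 ν : I)
    (hone : BTS.toTensorSystem.ActsOneDimLeft ν lam0)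
    (φ : I) (hφ : BTS.N ν lam0 φ = 1)
    (L : ℕ) (I0 : Set I) (hI0 : I0.Finite) :
    (∀ i : ℕ, 1 ≤ i → i + 2 ≤ L →
      BTS.toTensorSystem.MatEqOn L I0 (fun _ => lam0)
      (BTS.toTensorSystem.mulMat L I0 (fun _ => lam0)
      (BTS.toTensorSystem.pMat L (fun _ => lam0) (i) ν)
      (BTS.toTensorSystem.mulMat L I0 (fun _ => lam0)
      (BTS.Rmat L lam0 (i + 1))
      (BTS.toTensorSystem.pMat L (fun _ => lam0) (i) ν)))
      (smulMat (∑ᶠ υ : I, BTS.F lam0 lam0 lam0 φ υ ν * BTS.Rm lam0 lam0 υ * BTS.Fbar lam0 lam0 lam0 φ ν υ) (BTS.toTensorSystem.pMat L (fun _ => lam0) (i) ν)))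
    ∧ (∀ i : ℕ, 1 ≤ i → i + 2 ≤ L →
      BTS.toTensorSystem.MatEqOn L I0 (fun _ => lam0)
      (BTS.toTensorSystem.mulMat L I0 (fun _ => lam0)
      (BTS.toTensorSystem.pMat L (fun _ => lam0) (i) ν)
      (BTS.toTensorSystem.mulMat L I0 (fun _ => lam0)
      (BTS.RbarMat L lam0 (i + 1))
      (BTS.toTensorSystem.pMat L (fun _ => lam0) (i) ν)))
      (smulMat (∑ᶠ υ : I, BTS.F lam0 lam0 lam0 φ υ ν * BTS.Rbarm lam0 lam0 υ * BTS.Fbar lam0 lam0 lam0 φ ν υ) (BTS.toTensorSystem.pMat L (fun _ => lam0) (i) ν)))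
    ∧ (∀ i : ℕ, 2 ≤ i → i + 1 ≤ L →
      BTS.toTensorSystem.MatEqOn L I0 (fun _ => lam0)
      (BTS.toTensorSystem.mulMat L I0 (fun _ => lam0)
      (BTS.toTensorSystem.pMat L (fun _ => lam0) (i) ν)
      (BTS.toTensorSystem.mulMat L I0 (fun _ => lam0)
      (BTS.Rmat L lam0 (i - 1))
      (BTS.toTensorSystem.pMat L (fun _ => lam0) (i) ν)))
      (smulMat (∑ᶠ υ : I, BTS.F lam0 lam0 lam0 φ υ ν * BTS.Rm lam0 lam0 υ * BTS.Fbar lam0 lam0 lam0 φ ν υ) (BTS.toTensorSystem.pMat L (fun _ => lam0) (i) ν)))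
    ∧ (∀ i : ℕ, 2 ≤ i → i + 1 ≤ L →
      BTS.toTensorSystem.MatEqOn L I0 (fun _ => lam0)
      (BTS.toTensorSystem.mulMat L I0 (fun _ => lam0)
      (BTS.toTensorSystem.pMat L (fun _ => lam0) (i) ν)
      (BTS.toTensorSystem.mulMat L I0 (fun _ => lam0)
      (BTS.RbarMat L lam0 (i - 1))
      (BTS.toTensorSystem.pMat L (fun _ => lam0) (i) ν)))
      (smulMat (∑ᶠ υ : I, BTS.F lam0 lam0 lam0 φ υ ν * BTS.Rbarm lam0 lam0 υ * BTS.Fbar lam0 lam0 lam0 φ ν υ) (BTS.toTensorSystem.pMat L (fun _ => lam0) (i) ν))) := by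
  classical
  set TS := BTS.toTensorSystem with hTS
  have hsymm : ∀ x y z : I, TS.N x y z = TS.N y x z := BTS.N_symm
  have hscm : (∑ m ∈ TS.sN lam0 lam0,
        BTS.Rm lam0 lam0 m * (TS.F lam0 lam0 lam0 φ ν m * TS.Fbar lam0 lam0 lam0 φ m ν))
      = ∑ᶠ υ : I, TS.F lam0 lam0 lam0 φ υ ν * BTS.Rm lam0 lam0 υ
          * TS.Fbar lam0 lam0 lam0 φ ν υ := by
    rw [TS.scal lam0 ν φ hφ hsymm (fun m => BTS.Rm lam0 lam0 m) (fun f => BTS.Rm f lam0 φ)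
      (fun e g => BTS.hexagonR lam0 lam0 lam0 φ e g) (BTS.Rbarm lam0 lam0 ν)
      (BTS.Rm_Rbarm lam0 lam0 ν)]
    exact scalar_conv TS lam0 ν φ _
  have hscb : (∑ m ∈ TS.sN lam0 lam0,
        BTS.Rbarm lam0 lam0 m * (TS.F lam0 lam0 lam0 φ ν m * TS.Fbar lam0 lam0 lam0 φ m ν))
      = ∑ᶠ υ : I, TS.F lam0 lam0 lam0 φ υ ν * BTS.Rbarm lam0 lam0 υ
          * TS.Fbar lam0 lam0 lam0 φ ν υ := by
    rw [TS.scal lam0 ν φ hφ hsymm (fun m => BTS.Rbarm lam0 lam0 m)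
      (fun f => BTS.Rbarm f lam0 φ)
      (fun e g => BTS.hexagonRbar lam0 lam0 lam0 φ e g) (BTS.Rm lam0 lam0 ν)
      (by rw [mul_comm]; exact BTS.Rm_Rbarm lam0 lam0 ν)]
    exact scalar_conv TS lam0 ν φ _
  have hscm' := (scalar_conv TS lam0 ν φ (fun m => BTS.Rm lam0 lam0 m))
  have hscb' := (scalar_conv TS lam0 ν φ (fun m => BTS.Rbarm lam0 lam0 m))
  refine ⟨fun i hi1 hi2 => ?_, fun i hi1 hi2 => ?_, fun i hi1 hi2 => ?_, fun i hi1 hi2 => ?_⟩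
  · exact TS.main_plus lam0 ν φ hone hφ (fun m => BTS.Rm lam0 lam0 m)
      (fun m hm => BTS.Rm_vanish lam0 lam0 m hm) hscm L I0 i hi1 hi2
  · exact TS.main_plus lam0 ν φ hone hφ (fun m => BTS.Rbarm lam0 lam0 m)
      (fun m hm => BTS.Rbarm_vanish lam0 lam0 m hm) hscb L I0 i hi1 hi2
  · exact TS.main_minus lam0 ν φ hone hφ hsymm (fun m => BTS.Rm lam0 lam0 m)
      (fun m hm => BTS.Rm_vanish lam0 lam0 m hm) hscm' L I0 i hi1 hi2
  · exact TS.main_minus lam0 ν φ hone hφ hsymm (fun m => BTS.Rbarm lam0 lam0 m)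
      (fun m hm => BTS.Rbarm_vanish lam0 lam0 m hm) hscb' L I0 i hi1 hi2
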